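/- arXiv:cs/0702093 — 5 statements merged into one kernel-verified Lean document; each statement's English description precedes it below -/
import Mathlib

section
/- Let K ≥ 2 and let X₁, …, X_K, G be independent random variables, each exponentially distributed with rate 1. Let M = max(X₁,…,X_K). Then E[log(G/M) | G ≥ M] ≤ 2·log 2. -/
open scoped ENNReal
open MeasureTheory ProbabilityTheory Real Set Filter Topology


lemma exp_aux_hasDerivAt (n : ℕ) (t : ℝ) :
    HasDerivAt (fun t : ℝ => (1 - exp (-t))^(n+1) / (n+1))
      ((1 - exp (-t))^n * exp (-t)) t := by
  have h1 : HasDerivAt (fun t : ℝ => 1 - exp (-t)) (exp (-t)) t := by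
    simpa using ((hasDerivAt_neg t).exp).const_sub 1
  have h2 := (h1.pow (n+1)).div_const ((n:ℝ)+1)
  refine h2.congr_deriv ?_
  push_cast
  field_simp

lemma exp_aux_integrableOn (n : ℕ) :
    IntegrableOn (fun t : ℝ => (1 - exp (-t))^n * exp (-t)) (Ioi 0) := by
  have hexp : IntegrableOn (fun t : ℝ => exp (-t)) (Ioi (0:ℝ)) := by
    simpa using exp_neg_integrableOn_Ioi 0 zero_lt_one
  refine Integrable.mono hexp (Continuous.aestronglyMeasurable (by continuity)) ?_
  filter_upwards [ae_restrict_mem measurableSet_Ioi] with t (ht : (0:ℝ) < t)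
  have h0 : 0 ≤ 1 - exp (-t) := by
    have : exp (-t) ≤ 1 := exp_le_one_iff.2 (by linarith)
    linarith
  have h1 : (1 - exp (-t)) ≤ 1 := by nlinarith [exp_pos (-t)]
  rw [norm_mul, norm_pow, Real.norm_eq_abs, Real.norm_eq_abs,
    abs_of_nonneg (exp_pos (-t)).le, abs_of_nonneg h0]
  nlinarith [pow_le_one₀ h0 h1 (n := n), (exp_pos (-t)).le]

lemma exp_aux_integral (n : ℕ) :
    ∫ t in Ioi (0:ℝ), (1 - exp (-t))^n * exp (-t) = 1/(n+1) := by
  have ht : Tendsto (fun t : ℝ => (1 - exp (-t))^(n+1) / (n+1)) atTop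
      (𝓝 ((1 - 0)^(n+1) / (n+1))) := by
    exact ((tendsto_exp_neg_atTop_nhds_zero.const_sub 1).pow (n+1)).div_const _
  have h := integral_Ioi_of_hasDerivAt_of_tendsto'
    (fun x _ => exp_aux_hasDerivAt n x) (exp_aux_integrableOn n) ht
  rw [h]
  norm_num

lemma exp_aux_lintegral (n : ℕ) :
    ∫⁻ t in Ioi (0:ℝ), ENNReal.ofReal ((1 - exp (-t))^n * exp (-t))
      = ENNReal.ofReal (1/(n+1)) := by
  rw [← ofReal_integral_eq_lintegral_ofReal (exp_aux_integrableOn n) ?_, exp_aux_integral]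
  filter_upwards [ae_restrict_mem measurableSet_Ioi] with t (ht : (0:ℝ) < t)
  have h0 : 0 ≤ 1 - exp (-t) := by
    have : exp (-t) ≤ 1 := exp_le_one_iff.2 (by linarith)
    linarith
  exact mul_nonneg (pow_nonneg h0 n) (exp_pos (-t)).le

lemma claimA {t : ℝ} (ht : 0 ≤ t) :
    (1 - exp (-t)) + (1 - exp (-t))^2/2 ≤ t := by
  have hd : ∀ x : ℝ, HasDerivAt
      (fun t : ℝ => t - (1 - exp (-t)) - (1 - exp (-t))^2/2) ((1 - exp (-x))^2) x := by
    intro x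
    have h1 : HasDerivAt (fun t : ℝ => 1 - exp (-t)) (exp (-x)) x := by
      simpa using ((hasDerivAt_neg x).exp).const_sub 1
    have h2 := ((hasDerivAt_id x).sub h1).sub ((h1.pow 2).div_const 2)
    refine h2.congr_deriv ?_
    push_cast
    ring
  have key : Monotone (fun t : ℝ => t - (1 - exp (-t)) - (1 - exp (-t))^2/2) := by
    refine monotone_of_deriv_nonneg (fun x => (hd x).differentiableAt) (fun x => ?_)
    rw [(hd x).deriv]
    positivity
  have h0 := key ht
  simp only [exp_zero, neg_zero] at h0
  norm_num at h0
  linarith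

lemma pointwiseBound (K : ℕ) (hK : 1 ≤ K) {t : ℝ} (ht : 0 < t) :
    t⁻¹ * ((1 - exp (-t))^K * exp (-t)) ≤
      (1 - exp (-t))^(K-1) * exp (-t) - (1 - exp (-t))^K * exp (-t) / 2
        + (1 - exp (-t))^(K+1) * exp (-t) / 4 := by
  set u := 1 - exp (-t) with hu
  have he : (0:ℝ) < exp (-t) := exp_pos _
  have hu0 : 0 ≤ u := by
    have : exp (-t) ≤ 1 := exp_le_one_iff.2 (by linarith)
    simp [hu]; linarith
  have ht' : u + u^2/2 ≤ t := claimA ht.le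
  set v := u^(K-1) with hv
  have hv0 : 0 ≤ v := pow_nonneg hu0 _
  have hK1 : u^K = v * u := by rw [hv, ← pow_succ]; congr 1; omega
  have hK2 : u^(K+1) = v * u^2 := by rw [hv, ← pow_add]; congr 1; omega
  clear_value v u
  rw [hK1, hK2, inv_mul_le_iff₀ ht]
  have h1 : (0:ℝ) ≤ 1 - u/2 + u^2/4 := by nlinarith [sq_nonneg (u-1)]
  have h3 : u + u^4/8 ≤ t * (1 - u/2 + u^2/4) := by
    have := mul_le_mul_of_nonneg_right ht' h1
    nlinarith
  have h4 := mul_le_mul_of_nonneg_left h3 (mul_nonneg hv0 he.le)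
  have h5 : v * u * rexp (-t) ≤ v * rexp (-t) * (u + u^4/8) := by
    nlinarith [mul_nonneg (mul_nonneg hv0 he.le) (pow_nonneg hu0 4)]
  have h6 : v * rexp (-t) * (t * (1 - u/2 + u^2/4))
      = t * (v * rexp (-t) - v*u*rexp (-t)/2 + v*u^2*rexp (-t)/4) := by ring
  linarith

lemma expMeasure_eq : expMeasure 1 = volume.withDensity (exponentialPDF 1) := rfl

instance : IsProbabilityMeasure (expMeasure 1) := isProbabilityMeasure_expMeasure one_pos

lemma expMeasure_Iic (t : ℝ) :
    expMeasure 1 (Iic t) = ENNReal.ofReal (if 0 ≤ t then 1 - exp (-t) else 0) := by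
  rw [expMeasure_eq, withDensity_apply _ measurableSet_Iic,
    lintegral_exponentialPDF_eq_antiDeriv one_pos]
  simp

lemma expMeasure_singleton (t : ℝ) : expMeasure 1 {t} = 0 := by
  rw [expMeasure_eq]
  exact (withDensity_absolutelyContinuous _ _) (measure_singleton t)

lemma expMeasure_Iio (t : ℝ) :
    expMeasure 1 (Iio t) = ENNReal.ofReal (if 0 ≤ t then 1 - exp (-t) else 0) := by
  rw [← expMeasure_Iic, ← Iic_diff_right, measure_diff_null (expMeasure_singleton t)]

lemma expMeasure_Iio' {t : ℝ} : expMeasure 1 (Iio t) = ENNReal.ofReal (1 - exp (-t)) := by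
  rw [expMeasure_Iio]
  split_ifs with h
  · rfl
  · rw [ENNReal.ofReal_zero, eq_comm, ENNReal.ofReal_eq_zero]
    have : (1:ℝ) ≤ exp (-t) := by
      rw [← exp_zero]
      exact exp_le_exp.2 (by linarith)
    linarith

lemma expMeasure_Ici {t : ℝ} (ht : 0 ≤ t) :
    expMeasure 1 (Ici t) = ENNReal.ofReal (exp (-t)) := by
  have h1 : (Iio t)ᶜ = Ici t := compl_Iio
  have h2 := measure_compl (μ := expMeasure 1) (s := Iio t) measurableSet_Iio (measure_ne_top _ _)
  rw [h1] at h2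
  rw [h2, measure_univ, expMeasure_Iio', ← ENNReal.ofReal_one, ← ENNReal.ofReal_sub]
  · norm_num
  · have : exp (-t) ≤ 1 := exp_le_one_iff.2 (by linarith)
    linarith

lemma swap_aux {Ω : Type*} [MeasurableSpace Ω] (μ : Measure Ω) [SFinite μ]
    {A : Set (Ω × ℝ)} (hA : MeasurableSet A) {w : ℝ → ℝ≥0∞} (hw : Measurable w) :
    ∫⁻ ω, (∫⁻ t, A.indicator (fun p => w p.2) (ω, t) ∂volume) ∂μ
      = ∫⁻ t, w t * μ {ω | (ω, t) ∈ A} ∂volume := by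
  rw [lintegral_lintegral_swap]
  · refine lintegral_congr fun t => ?_
    have h1 : (fun ω => A.indicator (fun p : Ω × ℝ => w p.2) (ω, t))
        = {ω | (ω, t) ∈ A}.indicator (fun _ => w t) := by
      funext ω
      by_cases h : (ω, t) ∈ A
      · simp [Set.indicator, h]
      · simp [Set.indicator, h]
    have hAt : MeasurableSet {ω | (ω, t) ∈ A} :=
      measurable_prodMk_right hA
    rw [h1, lintegral_indicator hAt, setLIntegral_const]
  · exact ((hw.comp measurable_snd).indicator hA).aemeasurable

open MeasureTheory ProbabilityTheory Real

/-- Let `X₁, …, X_K, G` be independent `Exp(1)` random variables, `K ≥ 2`, and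
let `M = max(X₁,…,X_K)`.  Then `E[log (G / M) | G ≥ M] ≤ 2 log 2`, where the
conditional expectation given the event `{G ≥ M}` is the integral over that
event divided by its probability. -/
theorem stmt7 {Ω : Type*} [MeasurableSpace Ω] (μ : Measure Ω)
    [IsProbabilityMeasure μ] {K : ℕ} (hK : 2 ≤ K)
    (X : Fin K → Ω → ℝ) (G : Ω → ℝ)
    (hXm : ∀ i, Measurable (X i)) (hGm : Measurable G)
    (hIndep : iIndepFun
      (fun i : Option (Fin K) => Option.elim i G fun k => X k) μ)
    (hXd : ∀ i, Measure.map (X i) μ = expMeasure 1)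
    (hGd : Measure.map G μ = expMeasure 1) :
    (∫ ω in {ω | (⨆ i : Fin K, X i ω) ≤ G ω},
        Real.log (G ω / ⨆ i : Fin K, X i ω) ∂μ) /
      (μ {ω | (⨆ i : Fin K, X i ω) ≤ G ω}).toReal ≤ 2 * Real.log 2 := by
  classical
  have hKpos : 0 < K := by omega
  haveI : Nonempty (Fin K) := ⟨⟨0, hKpos⟩⟩
  set f : Option (Fin K) → Ω → ℝ := fun i => Option.elim i G fun k => X k with hf_def
  have hfm : ∀ j, Measurable (f j) := by rintro (_|i); exacts [hGm, hXm i]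
  set M : Ω → ℝ := fun ω => ⨆ i, X i ω with hM_def
  have hMm : Measurable M := Measurable.iSup hXm
  set S : Set Ω := {ω | M ω ≤ G ω} with hS_def
  have hSm : MeasurableSet S := measurableSet_le hMm hGm
  -- distribution facts
  have hXIio : ∀ (i : Fin K) (t : ℝ), μ (X i ⁻¹' Iio t) = ENNReal.ofReal (1 - exp (-t)) := by
    intro i t
    rw [← Measure.map_apply (hXm i) measurableSet_Iio, hXd i, expMeasure_Iio']
  have hGIci : ∀ t : ℝ, 0 ≤ t → μ (G ⁻¹' Ici t) = ENNReal.ofReal (exp (-t)) := by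
    intro t ht
    rw [← Measure.map_apply hGm measurableSet_Ici, hGd, expMeasure_Ici ht]
  -- sup facts
  have hle : ∀ (ω : Ω) (i : Fin K), X i ω ≤ M ω := fun ω i =>
    le_ciSup (Set.Finite.bddAbove (Set.finite_range fun j => X j ω)) i
  have hMlt : ∀ (t : ℝ) (ω : Ω), M ω < t ↔ ∀ i, X i ω < t := by
    intro t ω
    constructor
    · intro h i; exact lt_of_le_of_lt (hle ω i) h
    · intro h
      obtain ⟨i, hi⟩ := exists_eq_ciSup_of_finite (f := fun j => X j ω)
      calc M ω = X i ω := by rw [hM_def]; exact hi.symm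
        _ < t := h i
  -- a.e. positivity
  have haeX : ∀ᵐ ω ∂μ, 0 < X ⟨0, hKpos⟩ ω := by
    rw [ae_iff]
    have h : {ω | ¬ 0 < X ⟨0, hKpos⟩ ω} = X ⟨0, hKpos⟩ ⁻¹' Iic 0 := by
      ext ω; simp [not_lt]
    rw [h, ← Measure.map_apply (hXm _) measurableSet_Iic, hXd, expMeasure_Iic]
    simp
  have haeM : ∀ᵐ ω ∂μ, 0 < M ω := by
    filter_upwards [haeX] with ω h
    exact lt_of_lt_of_le h (hle ω _)
  -- joint event measures
  have hA : ∀ t : ℝ, 0 < t → μ {ω | M ω < t ∧ t ≤ G ω}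
      = ENNReal.ofReal ((1 - exp (-t))^K * exp (-t)) := by
    intro t ht
    set B : Option (Fin K) → Set ℝ := fun j => Option.elim j (Ici t) (fun _ => Iio t) with hB_def
    have hBm : ∀ j, MeasurableSet (B j) := by
      rintro (_|i)
      · exact measurableSet_Ici
      · exact measurableSet_Iio
    have hmul := hIndep.measure_inter_preimage_eq_mul (S := Finset.univ) (sets := B)
      (fun j _ => hBm j)
    have hset : (⋂ j ∈ Finset.univ, f j ⁻¹' B j) = {ω | M ω < t ∧ t ≤ G ω} := by
      ext ω
      simp only [Finset.mem_univ, Set.iInter_true, Set.mem_iInter, Set.mem_preimage,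
        Set.mem_setOf_eq, Set.iInter_coe_set]
      rw [Option.forall]
      simp only [hf_def, hB_def, Option.elim_none, Option.elim_some, Set.mem_Ici, Set.mem_Iio]
      constructor
      · rintro ⟨h1, h2⟩; exact ⟨(hMlt t ω).2 h2, h1⟩
      · rintro ⟨h1, h2⟩; exact ⟨h2, (hMlt t ω).1 h1⟩
    rw [hset] at hmul
    rw [hmul, Fintype.prod_option]
    simp only [hf_def, hB_def, Option.elim_none, Option.elim_some]
    rw [hGIci t ht.le]
    have : ∀ i : Fin K, μ (X i ⁻¹' Iio t) = ENNReal.ofReal (1 - exp (-t)) := fun i => hXIio i t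
    rw [Finset.prod_congr rfl (fun i _ => this i), Finset.prod_const, Finset.card_univ,
      Fintype.card_fin, ← ENNReal.ofReal_pow (by
        have : exp (-t) ≤ 1 := exp_le_one_iff.2 (by linarith)
        linarith), ← ENNReal.ofReal_mul (exp_pos (-t)).le]
    rw [mul_comm]
  have hB2 : ∀ t : ℝ, μ {ω | M ω < t} = (ENNReal.ofReal (1 - exp (-t)))^K := by
    intro t
    set B : Option (Fin K) → Set ℝ := fun j => Option.elim j univ (fun _ => Iio t) with hB_def
    have hBm : ∀ j, MeasurableSet (B j) := by
      rintro (_|i)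
      · exact MeasurableSet.univ
      · exact measurableSet_Iio
    have hmul := hIndep.measure_inter_preimage_eq_mul (S := Finset.univ) (sets := B)
      (fun j _ => hBm j)
    have hset : (⋂ j ∈ Finset.univ, f j ⁻¹' B j) = {ω | M ω < t} := by
      ext ω
      simp only [Finset.mem_univ, Set.iInter_true, Set.mem_iInter, Set.mem_preimage,
        Set.mem_setOf_eq, Set.iInter_coe_set]
      rw [Option.forall]
      simp only [hf_def, hB_def, Option.elim_none, Option.elim_some, Set.mem_univ, Set.mem_Iio,
        true_and]
      exact (hMlt t ω).symm
    rw [hset] at hmul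
    rw [hmul, Fintype.prod_option]
    simp only [hf_def, hB_def, Option.elim_none, Option.elim_some, Set.preimage_univ,
      measure_univ, one_mul]
    have : ∀ i : Fin K, μ (X i ⁻¹' Iio t) = ENNReal.ofReal (1 - exp (-t)) := fun i => hXIio i t
    rw [Finset.prod_congr rfl (fun i _ => this i), Finset.prod_const, Finset.card_univ,
      Fintype.card_fin]
  -- layer cake for N
  set A1 : Set (Ω × ℝ) := {p | M p.1 < p.2 ∧ p.2 ≤ G p.1} with hA1_def
  have hA1m : MeasurableSet A1 :=
    (measurableSet_lt (hMm.comp measurable_fst) measurable_snd).inter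
      (measurableSet_le measurable_snd (hGm.comp measurable_fst))
  have hNrep : ∫⁻ ω in S, ENNReal.ofReal (log (G ω / M ω)) ∂μ
      = ∫⁻ t, ENNReal.ofReal t⁻¹ * μ {ω | M ω < t ∧ t ≤ G ω} ∂volume := by
    rw [← lintegral_indicator hSm]
    have step1 : ∫⁻ ω, S.indicator (fun ω => ENNReal.ofReal (log (G ω / M ω))) ω ∂μ
        = ∫⁻ ω, (∫⁻ t, A1.indicator (fun p => ENNReal.ofReal p.2⁻¹) (ω, t) ∂volume) ∂μ := by
      refine lintegral_congr_ae ?_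
      filter_upwards [haeM] with ω hMpos
      have hIoc : ∀ t : ℝ, A1.indicator (fun p => ENNReal.ofReal p.2⁻¹) (ω, t)
          = (Ioc (M ω) (G ω)).indicator (fun u => ENNReal.ofReal u⁻¹) t := by
        intro t
        simp only [Set.indicator_apply, Set.mem_Ioc, hA1_def, Set.mem_setOf_eq]
      simp_rw [hIoc]
      rw [lintegral_indicator measurableSet_Ioc]
      by_cases hωS : ω ∈ S
      · rw [Set.indicator_of_mem hωS]
        have hMG : M ω ≤ G ω := hωS
        have hGpos : 0 < G ω := lt_of_lt_of_le hMpos hMG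
        have hint : IntegrableOn (fun u : ℝ => u⁻¹) (Ioc (M ω) (G ω)) volume := by
          apply (ContinuousOn.integrableOn_Icc ?_).mono_set Ioc_subset_Icc_self
          exact continuousOn_inv₀.mono fun x hx =>
            Set.mem_compl_singleton_iff.2 (ne_of_gt (lt_of_lt_of_le hMpos hx.1))
        have hnn : 0 ≤ᵐ[volume.restrict (Ioc (M ω) (G ω))] fun u : ℝ => u⁻¹ := by
          filter_upwards [ae_restrict_mem measurableSet_Ioc] with u hu
          exact inv_nonneg.2 (le_of_lt (lt_trans hMpos hu.1))
        rw [← ofReal_integral_eq_lintegral_ofReal hint hnn]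
        congr 1
        rw [← intervalIntegral.integral_of_le hMG, integral_inv_of_pos hMpos hGpos]
      · rw [Set.indicator_of_notMem hωS]
        have hGM : G ω < M ω := not_le.1 hωS
        rw [Set.Ioc_eq_empty (not_lt.2 (le_of_lt hGM)), Measure.restrict_empty,
          lintegral_zero_measure]
    rw [step1, swap_aux μ hA1m (measurable_inv.ennreal_ofReal)]
    rfl
  -- bound on N
  have hNbound : ∫⁻ t, ENNReal.ofReal t⁻¹ * μ {ω | M ω < t ∧ t ≤ G ω} ∂volume
      ≤ ENNReal.ofReal (1/(K:ℝ) - (1/((K:ℝ)+1))/2 + (1/((K:ℝ)+2))/4) := by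
    have hres : ∫⁻ t, ENNReal.ofReal t⁻¹ * μ {ω | M ω < t ∧ t ≤ G ω} ∂volume
        = ∫⁻ t in Ioi 0, ENNReal.ofReal t⁻¹ * μ {ω | M ω < t ∧ t ≤ G ω} ∂volume := by
      rw [← lintegral_indicator measurableSet_Ioi]
      refine lintegral_congr fun t => ?_
      by_cases h : t ∈ Ioi (0:ℝ)
      · rw [Set.indicator_of_mem h]
      · rw [Set.indicator_of_notMem h]
        have ht : t⁻¹ ≤ 0 := inv_nonpos.2 (by simpa using h)
        rw [ENNReal.ofReal_eq_zero.2 ht, zero_mul]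
    rw [hres]
    set g : ℝ → ℝ := fun t => (1 - exp (-t))^(K-1) * exp (-t)
      - (1 - exp (-t))^K * exp (-t) / 2 + (1 - exp (-t))^(K+1) * exp (-t) / 4 with hg_def
    have hgint : IntegrableOn g (Ioi 0) volume :=
      ((exp_aux_integrableOn (K-1)).sub ((exp_aux_integrableOn K).div_const 2)).add
        ((exp_aux_integrableOn (K+1)).div_const 4)
    have hgm : Measurable g := by
      apply Measurable.add
      apply Measurable.sub
      · exact (((measurable_exp.comp measurable_neg).const_sub 1).pow_const _).mul
          (measurable_exp.comp measurable_neg)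
      · exact ((((measurable_exp.comp measurable_neg).const_sub 1).pow_const _).mul
          (measurable_exp.comp measurable_neg)).div_const 2
      · exact ((((measurable_exp.comp measurable_neg).const_sub 1).pow_const _).mul
          (measurable_exp.comp measurable_neg)).div_const 4
    have hpb : ∀ t ∈ Ioi (0:ℝ), t⁻¹ * ((1 - exp (-t))^K * exp (-t)) ≤ g t :=
      fun t ht => pointwiseBound K (by omega) ht
    calc ∫⁻ t in Ioi 0, ENNReal.ofReal t⁻¹ * μ {ω | M ω < t ∧ t ≤ G ω} ∂volume
        = ∫⁻ t in Ioi 0, ENNReal.ofReal (t⁻¹ * ((1 - exp (-t))^K * exp (-t))) ∂volume := by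
          refine setLIntegral_congr_fun measurableSet_Ioi (fun t ht => ?_)
          rw [hA t ht, ← ENNReal.ofReal_mul (inv_nonneg.2 (le_of_lt ht))]
      _ ≤ ∫⁻ t in Ioi 0, ENNReal.ofReal (g t) ∂volume := by
          refine setLIntegral_mono hgm.ennreal_ofReal fun t ht => ?_
          exact ENNReal.ofReal_le_ofReal (hpb t ht)
      _ = ENNReal.ofReal (∫ t in Ioi 0, g t ∂volume) := by
          refine (ofReal_integral_eq_lintegral_ofReal hgint ?_).symm
          filter_upwards [ae_restrict_mem measurableSet_Ioi] with t ht
          have ht' : (0:ℝ) < t := ht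
          have h0 : 0 ≤ 1 - exp (-t) := by
            have : exp (-t) ≤ 1 := exp_le_one_iff.2 (by linarith)
            linarith
          exact le_trans (mul_nonneg (inv_nonneg.2 ht'.le)
            (mul_nonneg (pow_nonneg h0 K) (exp_pos _).le)) (hpb t ht)
      _ ≤ ENNReal.ofReal (1/(K:ℝ) - (1/((K:ℝ)+1))/2 + (1/((K:ℝ)+2))/4) := by
          apply ENNReal.ofReal_le_ofReal
          apply le_of_eq
          have hsplit : ∫ t in Ioi (0:ℝ), g t ∂volume
              = (∫ t in Ioi (0:ℝ), (1 - exp (-t))^(K-1) * exp (-t))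
                - (∫ t in Ioi (0:ℝ), (1 - exp (-t))^K * exp (-t))/2
                + (∫ t in Ioi (0:ℝ), (1 - exp (-t))^(K+1) * exp (-t))/4 := by
            have i1 : Integrable (fun t : ℝ => (1 - exp (-t))^(K-1) * exp (-t))
                (volume.restrict (Ioi 0)) := exp_aux_integrableOn (K-1)
            have i2 : Integrable (fun t : ℝ => (1 - exp (-t))^K * exp (-t) / 2)
                (volume.restrict (Ioi 0)) := (exp_aux_integrableOn K).div_const 2
            have i3 : Integrable (fun t : ℝ => (1 - exp (-t))^(K+1) * exp (-t) / 4)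
                (volume.restrict (Ioi 0)) := (exp_aux_integrableOn (K+1)).div_const 4
            have i12 : Integrable (fun t : ℝ => (1 - exp (-t))^(K-1) * exp (-t)
                - (1 - exp (-t))^K * exp (-t) / 2) (volume.restrict (Ioi 0)) := i1.sub i2
            rw [hg_def]
            rw [integral_add i12 i3, integral_sub i1 i2, integral_div, integral_div]
          rw [hsplit, exp_aux_integral, exp_aux_integral, exp_aux_integral]
          have hc : ((K-1 : ℕ) : ℝ) = (K:ℝ) - 1 := by
            push_cast [Nat.cast_sub (show 1 ≤ K by omega)]
            ring
          rw [hc]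
          push_cast
          ring
  -- independence of M and G
  have hMG_indep : IndepFun M G μ := by
    have hdisj : Disjoint (Finset.univ.image (some : Fin K → Option (Fin K)))
        ({none} : Finset (Option (Fin K))) := by
      simp [Finset.disjoint_singleton_right]
    have h1 := hIndep.indepFun_finset (Finset.univ.image (some : Fin K → Option (Fin K)))
      {none} hdisj hfm
    have hφ : Measurable (fun v : ((Finset.univ.image (some : Fin K → Option (Fin K)) :
        Finset (Option (Fin K))) : Type _) → ℝ => ⨆ i : Fin K, v ⟨some i, by simp⟩) :=
      Measurable.iSup fun i => measurable_pi_apply _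
    have hψ : Measurable (fun v : ((({none} : Finset (Option (Fin K)))) : Type _) → ℝ =>
        v ⟨none, by simp⟩) := measurable_pi_apply _
    exact h1.comp hφ hψ
  -- probability of S
  have hP : μ S = ENNReal.ofReal (1/((K:ℝ)+1)) := by
    have hpair : Measurable fun ω => (M ω, G ω) := hMm.prodMk hGm
    have hsle : MeasurableSet {p : ℝ × ℝ | p.1 ≤ p.2} :=
      measurableSet_le measurable_fst measurable_snd
    have hmap := (indepFun_iff_map_prod_eq_prod_map_map hMm.aemeasurable hGm.aemeasurable).mp
      hMG_indep
    have h3 : μ S = ∫⁻ x, expMeasure 1 (Ici x) ∂(μ.map M) := by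
      have hSeq : S = (fun ω => (M ω, G ω)) ⁻¹' {p : ℝ × ℝ | p.1 ≤ p.2} := rfl
      rw [hSeq, ← Measure.map_apply hpair hsle, hmap, hGd, Measure.prod_apply hsle]
      refine lintegral_congr fun x => ?_
      congr 1
    have hae' : ∀ᵐ x ∂(μ.map M), 0 < x := by
      rw [ae_map_iff hMm.aemeasurable (measurableSet_Ioi : MeasurableSet {x : ℝ | 0 < x})]
      exact haeM
    have h4 : ∫⁻ x, expMeasure 1 (Ici x) ∂(μ.map M)
        = ∫⁻ ω, ENNReal.ofReal (exp (-(M ω))) ∂μ := by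
      rw [lintegral_congr_ae (hae'.mono fun x hx => by
        rw [expMeasure_Ici (le_of_lt hx)])]
      exact lintegral_map (measurable_exp.comp measurable_neg).ennreal_ofReal hMm
    have hA2m : MeasurableSet {p : Ω × ℝ | M p.1 < p.2} :=
      measurableSet_lt (hMm.comp measurable_fst) measurable_snd
    have h5 : ∫⁻ ω, ENNReal.ofReal (exp (-(M ω))) ∂μ
        = ∫⁻ ω, (∫⁻ t, ({p : Ω × ℝ | M p.1 < p.2}).indicator
            (fun p => ENNReal.ofReal (exp (-p.2))) (ω, t) ∂volume) ∂μ := by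
      refine lintegral_congr_ae ?_
      filter_upwards [haeM] with ω hMpos
      have hind : ∀ t : ℝ, ({p : Ω × ℝ | M p.1 < p.2}).indicator
          (fun p => ENNReal.ofReal (exp (-p.2))) (ω, t)
          = (Ioi (M ω)).indicator (fun u => ENNReal.ofReal (exp (-u))) t := by
        intro t
        simp only [Set.indicator_apply, Set.mem_Ioi, Set.mem_setOf_eq]
      simp_rw [hind]
      rw [lintegral_indicator measurableSet_Ioi]
      have hintexp : IntegrableOn (fun u : ℝ => exp (-u)) (Ioi (M ω)) volume := by
        simpa using exp_neg_integrableOn_Ioi (M ω) one_pos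
      rw [← ofReal_integral_eq_lintegral_ofReal hintexp
        (ae_of_all _ fun u => (exp_pos (-u)).le), integral_exp_neg_Ioi]
    have hw : Measurable fun u : ℝ => ENNReal.ofReal (exp (-u)) :=
      (measurable_exp.comp measurable_neg).ennreal_ofReal
    rw [h3, h4, h5, swap_aux μ hA2m hw]
    have hres : ∫⁻ t, ENNReal.ofReal (exp (-t)) * μ {ω | (ω, t) ∈ {p : Ω × ℝ | M p.1 < p.2}} ∂volume
        = ∫⁻ t in Ioi 0, ENNReal.ofReal (exp (-t)) * μ {ω | M ω < t} ∂volume := by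
      rw [← lintegral_indicator measurableSet_Ioi]
      refine lintegral_congr fun t => ?_
      by_cases h : t ∈ Ioi (0:ℝ)
      · rw [Set.indicator_of_mem h]
        rfl
      · rw [Set.indicator_of_notMem h]
        have ht : t ≤ 0 := by simpa using h
        have : μ {ω | M ω < t} = 0 := by
          rw [hB2 t, ENNReal.ofReal_eq_zero.2 (by
            have : (1:ℝ) ≤ exp (-t) := by
              rw [← exp_zero]
              exact exp_le_exp.2 (by linarith)
            linarith), zero_pow (by omega)]
        rw [show {ω | (ω, t) ∈ {p : Ω × ℝ | M p.1 < p.2}} = {ω | M ω < t} from rfl, this, mul_zero]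
    rw [hres]
    calc ∫⁻ t in Ioi 0, ENNReal.ofReal (exp (-t)) * μ {ω | M ω < t} ∂volume
        = ∫⁻ t in Ioi 0, ENNReal.ofReal ((1 - exp (-t))^K * exp (-t)) ∂volume := by
          refine setLIntegral_congr_fun measurableSet_Ioi (fun t ht => ?_)
          have ht' : (0:ℝ) < t := ht
          have h0 : 0 ≤ 1 - exp (-t) := by
            have : exp (-t) ≤ 1 := exp_le_one_iff.2 (by linarith)
            linarith
          rw [hB2 t, ← ENNReal.ofReal_pow h0, ← ENNReal.ofReal_mul (exp_pos (-t)).le, mul_comm]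
      _ = ENNReal.ofReal (1/((K:ℝ)+1)) := by
          rw [exp_aux_lintegral K]
  -- final assembly
  have hnum : ∫ ω in S, log (G ω / M ω) ∂μ
      = (∫⁻ ω in S, ENNReal.ofReal (log (G ω / M ω)) ∂μ).toReal := by
    apply integral_eq_lintegral_of_nonneg_ae
    · filter_upwards [ae_restrict_mem hSm, ae_restrict_of_ae haeM] with ω h1 h2
      exact Real.log_nonneg ((one_le_div h2).2 h1)
    · exact (Real.measurable_log.comp (hGm.div hMm)).aestronglyMeasurable
  set x : ℝ := (K : ℝ) with hx_def
  have hx2 : (2:ℝ) ≤ x := by rw [hx_def]; exact_mod_cast hK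
  have hx0 : (0:ℝ) < x := by linarith
  have hBnn : (0:ℝ) ≤ 1/x - (1/(x+1))/2 + (1/(x+2))/4 := by
    have h1 : (1:ℝ)/(x+1) ≤ 1/x := by
      apply one_div_le_one_div_of_le hx0
      linarith
    have h2 : (0:ℝ) ≤ (1/(x+2))/4 := by positivity
    have h3 : (0:ℝ) < 1/x := by positivity
    linarith
  have hnum_le : ∫ ω in S, log (G ω / M ω) ∂μ ≤ 1/x - (1/(x+1))/2 + (1/(x+2))/4 := by
    rw [hnum]
    exact ENNReal.toReal_le_of_le_ofReal hBnn (le_trans (le_of_eq hNrep) hNbound)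
  have hden : (μ S).toReal = 1/(x+1) := by
    rw [hP, ENNReal.toReal_ofReal (by positivity)]
  have hkey : 1/x - (1/(x+1))/2 + (1/(x+2))/4 ≤ 5/4 * (1/(x+1)) := by
    have hA' : 1/x - (1/(x+1))/2 + (1/(x+2))/4
        = (3*x^2+9*x+8) / (4*x*(x+1)*(x+2)) := by
      field_simp
      ring
    have hB' : 5/4 * (1/(x+1)) = (5*x^2+10*x) / (4*x*(x+1)*(x+2)) := by
      field_simp
      ring
    rw [hA', hB', div_le_div_iff₀ (by positivity) (by positivity)]
    nlinarith [mul_nonneg (show (0:ℝ) ≤ 2*x^2+x-8 by nlinarith)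
      (show (0:ℝ) ≤ 4*x*(x+1)*(x+2) by positivity)]
  have hlog : (5:ℝ)/4 ≤ 2 * Real.log 2 := by
    nlinarith [Real.log_two_gt_d9]
  show (∫ ω in S, log (G ω / M ω) ∂μ) / (μ S).toReal ≤ 2 * Real.log 2
  rw [hden, div_le_iff₀ (by positivity : (0:ℝ) < 1/(x+1))]
  calc ∫ ω in S, log (G ω / M ω) ∂μ ≤ 1/x - (1/(x+1))/2 + (1/(x+2))/4 := hnum_le
    _ ≤ 5/4 * (1/(x+1)) := hkey
    _ ≤ 2 * Real.log 2 * (1/(x+1)) := by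
        apply mul_le_mul_of_nonneg_right hlog (by positivity)
end

section
/- Let γ > 0 and let μ be a nonnegative random variable. Then the function Ψ : [0,∞) → ℝ defined by Ψ(y) = log(1 + γ·y) − E[log(1 + min(γ, μ)·y)] is nonnegative and concave on [0,∞). -/
open MeasureTheory

lemma stmt12_hasDeriv {γ c : ℝ} (hγ : 0 < γ) (hc : 0 ≤ c) {z : ℝ} (hz : 0 ≤ z) :
    HasDerivAt (fun y : ℝ => Real.log (1 + γ * y) - Real.log (1 + c * y))
      (γ / (1 + γ * z) - c / (1 + c * z)) z := by
  have h1 : (0:ℝ) < 1 + γ * z := by nlinarith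
  have h2 : (0:ℝ) < 1 + c * z := by nlinarith
  have d1 : HasDerivAt (fun y : ℝ => Real.log (1 + γ * y)) (γ / (1 + γ * z)) z := by
    have h : HasDerivAt (fun y : ℝ => 1 + γ * y) γ z := by
      simpa using ((hasDerivAt_id z).const_mul γ).const_add 1
    simpa [div_eq_inv_mul, Function.comp_def] using (Real.hasDerivAt_log h1.ne').comp z h
  have d2 : HasDerivAt (fun y : ℝ => Real.log (1 + c * y)) (c / (1 + c * z)) z := by
    have h : HasDerivAt (fun y : ℝ => 1 + c * y) c z := by
      simpa using ((hasDerivAt_id z).const_mul c).const_add 1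
    simpa [div_eq_inv_mul, Function.comp_def] using (Real.hasDerivAt_log h2.ne').comp z h
  exact d1.sub d2

lemma stmt12_concave_aux {γ c : ℝ} (hγ : 0 < γ) (hc : 0 ≤ c) (hcγ : c ≤ γ) :
    ConcaveOn ℝ (Set.Ici 0)
      (fun y : ℝ => Real.log (1 + γ * y) - Real.log (1 + c * y)) := by
  have hint : interior (Set.Ici (0:ℝ)) = Set.Ioi 0 := interior_Ici
  apply AntitoneOn.concaveOn_of_deriv (convex_Ici 0)
  · apply ContinuousOn.sub
    · refine (Real.continuousOn_log.comp (by fun_prop) ?_)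
      intro y hy
      have : (0:ℝ) < 1 + γ * y := by nlinarith [Set.mem_Ici.mp hy]
      simp [Set.mem_compl_iff, this.ne']
    · refine (Real.continuousOn_log.comp (by fun_prop) ?_)
      intro y hy
      have : (0:ℝ) < 1 + c * y := by nlinarith [Set.mem_Ici.mp hy]
      simp [Set.mem_compl_iff, this.ne']
  · rw [hint]
    intro y hy
    exact (stmt12_hasDeriv hγ hc (le_of_lt hy)).differentiableAt.differentiableWithinAt
  · rw [hint]
    intro x hx y hy hxy
    rw [(stmt12_hasDeriv hγ hc (le_of_lt hx)).deriv,
        (stmt12_hasDeriv hγ hc (le_of_lt hy)).deriv]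
    have hx' := le_of_lt (Set.mem_Ioi.mp hx)
    have hy' := le_of_lt (Set.mem_Ioi.mp hy)
    have e : ∀ z : ℝ, 0 ≤ z → γ / (1 + γ * z) - c / (1 + c * z)
        = (γ - c) / ((1 + γ * z) * (1 + c * z)) := by
      intro z hz
      have h1 : (0:ℝ) < 1 + γ * z := by nlinarith
      have h2 : (0:ℝ) < 1 + c * z := by nlinarith
      field_simp
      ring
    rw [e x hx', e y hy']
    have h1x : (0:ℝ) < 1 + γ * x := by nlinarith
    have h2x : (0:ℝ) < 1 + c * x := by nlinarith
    have h1y : (0:ℝ) < 1 + γ * y := by nlinarith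
    have h2y : (0:ℝ) < 1 + c * y := by nlinarith
    apply div_le_div_of_nonneg_left (by linarith) (by positivity)
    · nlinarith [mul_self_le_mul_self hx' hxy, mul_nonneg hγ.le hc]

/-- Let `γ > 0` and let `W` be a nonnegative random variable on a probability
space.  Then `Ψ(y) = log(1 + γ·y) − E[log(1 + min(γ, W)·y)]` is nonnegative and
concave on `[0, ∞)`. -/
theorem stmt12 {Ω : Type*} [MeasurableSpace Ω] (ν : Measure Ω)
    [IsProbabilityMeasure ν] {γ : ℝ} (hγ : 0 < γ)
    (W : Ω → ℝ) (hWm : Measurable W) (hW : ∀ ω, 0 ≤ W ω) :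
    (∀ y : ℝ, 0 ≤ y →
      0 ≤ Real.log (1 + γ * y) - ∫ ω, Real.log (1 + min γ (W ω) * y) ∂ν) ∧
    ConcaveOn ℝ (Set.Ici 0)
      (fun y : ℝ =>
        Real.log (1 + γ * y) - ∫ ω, Real.log (1 + min γ (W ω) * y) ∂ν) := by
  set c : Ω → ℝ := fun ω => min γ (W ω) with hcdef
  have hc0 : ∀ ω, 0 ≤ c ω := fun ω => le_min hγ.le (hW ω)
  have hcγ : ∀ ω, c ω ≤ γ := fun ω => min_le_left _ _
  have hcm : Measurable c := measurable_const.min hWm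
  -- basic bounds
  have hpos : ∀ (ω) (y : ℝ), 0 ≤ y → (0:ℝ) < 1 + c ω * y := by
    intro ω y hy; nlinarith [hc0 ω, mul_nonneg (hc0 ω) hy]
  have hlog_nonneg : ∀ (ω) (y : ℝ), 0 ≤ y → 0 ≤ Real.log (1 + c ω * y) := by
    intro ω y hy
    exact Real.log_nonneg (by nlinarith [mul_nonneg (hc0 ω) hy])
  have hlog_le : ∀ (ω) (y : ℝ), 0 ≤ y →
      Real.log (1 + c ω * y) ≤ Real.log (1 + γ * y) := by
    intro ω y hy
    apply Real.log_le_log (hpos ω y hy)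
    nlinarith [mul_le_mul_of_nonneg_right (hcγ ω) hy]
  -- integrability
  have hInt : ∀ (y : ℝ), 0 ≤ y → Integrable (fun ω => Real.log (1 + c ω * y)) ν := by
    intro y hy
    apply Integrable.mono' (integrable_const (Real.log (1 + γ * y)))
    · exact (Real.measurable_log.comp ((hcm.mul_const y).const_add 1)).aestronglyMeasurable
    · filter_upwards with ω
      rw [Real.norm_eq_abs, abs_of_nonneg (hlog_nonneg ω y hy)]
      exact hlog_le ω y hy
  constructor
  · intro y hy
    have : ∫ ω, Real.log (1 + c ω * y) ∂ν ≤ ∫ _ω, Real.log (1 + γ * y) ∂ν := by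
      apply integral_mono (hInt y hy) (integrable_const _)
      intro ω; exact hlog_le ω y hy
    rw [integral_const, probReal_univ] at this
    simpa using this
  · constructor
    · exact convex_Ici 0
    · intro y₁ h₁ y₂ h₂ a b ha hb hab
      simp only [Set.mem_Ici] at h₁ h₂
      have h₀ : 0 ≤ a * y₁ + b * y₂ := by positivity
      set y₀ := a * y₁ + b * y₂ with hy₀
      -- pointwise concavity
      have hpt : ∀ ω, a * (Real.log (1 + γ * y₁) - Real.log (1 + c ω * y₁))
          + b * (Real.log (1 + γ * y₂) - Real.log (1 + c ω * y₂))
          ≤ Real.log (1 + γ * y₀) - Real.log (1 + c ω * y₀) := by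
        intro ω
        have := (stmt12_concave_aux hγ (hc0 ω) (hcγ ω)).2
          (Set.mem_Ici.mpr h₁) (Set.mem_Ici.mpr h₂) ha hb hab
        simpa using this
      -- integrability of the differences
      have hIntSub : ∀ y : ℝ, 0 ≤ y →
          Integrable (fun ω => Real.log (1 + γ * y) - Real.log (1 + c ω * y)) ν :=
        fun y hy => (integrable_const _).sub (hInt y hy)
      have eSub : ∀ y : ℝ, 0 ≤ y →
          ∫ ω, (Real.log (1 + γ * y) - Real.log (1 + c ω * y)) ∂ν
            = Real.log (1 + γ * y) - ∫ ω, Real.log (1 + c ω * y) ∂ν := by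
        intro y hy
        rw [integral_sub (integrable_const _) (hInt y hy), integral_const, probReal_univ]
        simp
      -- integrate
      have hI : ∫ ω, (a * (Real.log (1 + γ * y₁) - Real.log (1 + c ω * y₁))
          + b * (Real.log (1 + γ * y₂) - Real.log (1 + c ω * y₂))) ∂ν
          ≤ ∫ ω, (Real.log (1 + γ * y₀) - Real.log (1 + c ω * y₀)) ∂ν := by
        apply integral_mono _ (hIntSub y₀ h₀) hpt
        exact ((hIntSub y₁ h₁).const_mul a).add ((hIntSub y₂ h₂).const_mul b)
      have e1 : ∫ ω, (a * (Real.log (1 + γ * y₁) - Real.log (1 + c ω * y₁))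
          + b * (Real.log (1 + γ * y₂) - Real.log (1 + c ω * y₂))) ∂ν
          = a * (Real.log (1 + γ * y₁) - ∫ ω, Real.log (1 + c ω * y₁) ∂ν)
          + b * (Real.log (1 + γ * y₂) - ∫ ω, Real.log (1 + c ω * y₂) ∂ν) := by
        rw [integral_add ((hIntSub y₁ h₁).const_mul a) ((hIntSub y₂ h₂).const_mul b),
          integral_const_mul, integral_const_mul, eSub y₁ h₁, eSub y₂ h₂]
      rw [e1, eSub y₀ h₀] at hI
      simp only [smul_eq_mul]
      exact hI
end

section
/- Let K ≥ 1 and let H₁,…,H_K, G be independent Exp(1) random variables with M = max(H₁,…,H_K). Then lim_{P̄ → ∞} R⁺_K(P̄) = E[max(0, log(M/G))]. -/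
open MeasureTheory ProbabilityTheory Real Filter

lemma exp_integrable_transfer {f : ℝ → ℝ}
    (h : MeasureTheory.IntegrableOn (fun x => f x * Real.exp (-x)) (Set.Ioi 0)) :
    MeasureTheory.Integrable f (expMeasure 1) := by
  have hmeas : Measurable (gammaPDF 1 1) := (measurable_gammaPDFReal 1 1).ennreal_ofReal
  rw [expMeasure, gammaMeasure, integrable_withDensity_iff hmeas
    (Filter.Eventually.of_forall fun x => ENNReal.ofReal_lt_top)]
  have heq : (fun x => f x * (gammaPDF 1 1 x).toReal)
      = Set.indicator (Set.Ici 0) (fun x => f x * Real.exp (-x)) := by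
    funext x
    rw [gammaPDF, ENNReal.toReal_ofReal (gammaPDFReal_nonneg zero_lt_one zero_lt_one x)]
    unfold gammaPDFReal
    by_cases hx : (0:ℝ) ≤ x
    · simp [hx, Real.Gamma_one, Real.rpow_zero, Real.one_rpow]
    · simp [hx]
  rw [heq]
  exact ((integrableOn_Ici_iff_integrableOn_Ioi).2 h).integrable_indicator measurableSet_Ici

lemma expMeasure_Iic_zero : expMeasure 1 (Set.Iic 0) = 0 := by
  rw [expMeasure, gammaMeasure, MeasureTheory.withDensity_apply _ measurableSet_Iic,
    lintegral_Iic_eq_lintegral_Iio_add_Icc _ le_rfl,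
    lintegral_gammaPDF_of_nonpos le_rfl, Set.Icc_self, zero_add,
    MeasureTheory.setLIntegral_measure_zero _ _ (by simp)]

lemma key_ineq {m g p : ℝ} (hm : 0 < m) (hg : 0 < g) (hp : 0 ≤ p) :
    max 0 (Real.log (1 + m * p) - Real.log (1 + g * p)) ≤ max 0 (Real.log (m / g)) := by
  rcases le_or_gt m g with h | h
  · refine max_le (le_max_left _ _) (le_trans ?_ (le_max_left _ _))
    have h1 : (0:ℝ) < 1 + m * p := by nlinarith
    have := Real.log_le_log h1 (by nlinarith : 1 + m * p ≤ 1 + g * p)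
    linarith
  · refine max_le_max le_rfl ?_
    have h1 : (0:ℝ) < 1 + m * p := by nlinarith
    have h2 : (0:ℝ) < 1 + g * p := by nlinarith
    rw [Real.log_div hm.ne' hg.ne']
    have key : Real.log ((1 + m * p) * g) ≤ Real.log ((1 + g * p) * m) :=
      Real.log_le_log (by positivity) (by nlinarith)
    rw [Real.log_mul h1.ne' hg.ne', Real.log_mul h2.ne' hm.ne'] at key
    linarith

lemma key_tendsto {m g : ℝ} (hm : 0 < m) (hg : 0 < g) :
    Filter.Tendsto (fun P : ℝ => max 0 (Real.log (1 + m * P) - Real.log (1 + g * P)))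
      Filter.atTop (nhds (max 0 (Real.log (m / g)))) := by
  apply Filter.Tendsto.max tendsto_const_nhds
  have h0 : Filter.Tendsto (fun P : ℝ => P⁻¹) Filter.atTop (nhds 0) := tendsto_inv_atTop_zero
  have hma : Filter.Tendsto (fun P : ℝ => P⁻¹ + m) atTop (nhds m) := by
    simpa using h0.add_const m
  have hga : Filter.Tendsto (fun P : ℝ => P⁻¹ + g) atTop (nhds g) := by
    simpa using h0.add_const g
  have hm' : Filter.Tendsto (fun P : ℝ => Real.log (P⁻¹ + m)) atTop (nhds (Real.log m)) := by
    exact (Real.continuousAt_log hm.ne').tendsto.comp hma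
  have hg' : Filter.Tendsto (fun P : ℝ => Real.log (P⁻¹ + g)) atTop (nhds (Real.log g)) := by
    exact (Real.continuousAt_log hg.ne').tendsto.comp hga
  rw [Real.log_div hm.ne' hg.ne']
  refine (hm'.sub hg').congr' ?_
  filter_upwards [Filter.eventually_gt_atTop 0] with P hP
  have hmm : (0:ℝ) < P⁻¹ + m := by positivity
  have hgg : (0:ℝ) < P⁻¹ + g := by positivity
  have e1 : 1 + m * P = P * (P⁻¹ + m) := by field_simp
  have e2 : 1 + g * P = P * (P⁻¹ + g) := by field_simp
  rw [e1, e2, Real.log_mul hP.ne' hmm.ne', Real.log_mul hP.ne' hgg.ne']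
  ring

/-- The achievable (lower-bound) secrecy sum-rate `R⁻(P̄)`: the supremum, over
measurable power allocations `p : [0,∞) → [0,∞)` with `E[p(M)] ≤ P̄`, of
`E[log(1 + M·p(M)) − log(1 + G·p(M))]`. -/
noncomputable def Rminus {Ω : Type*} [MeasurableSpace Ω] (μ : Measure Ω)
    (M G : Ω → ℝ) (P : ℝ) : ℝ :=
  sSup {r : ℝ | ∃ p : ℝ → ℝ, Measurable p ∧ (∀ x, 0 ≤ p x) ∧
    (∫ ω, p (M ω) ∂μ) ≤ P ∧
    r = ∫ ω, (Real.log (1 + M ω * p (M ω)) - Real.log (1 + G ω * p (M ω))) ∂μ}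

/-- The upper bound `R⁺(P̄)`: the supremum, over measurable power allocations
`p : [0,∞) → [0,∞)` with `E[p(M)] ≤ P̄`, of
`E[max(0, log(1 + M·p(M)) − log(1 + G·p(M)))]`. -/
noncomputable def Rplus {Ω : Type*} [MeasurableSpace Ω] (μ : Measure Ω)
    (M G : Ω → ℝ) (P : ℝ) : ℝ :=
  sSup {r : ℝ | ∃ p : ℝ → ℝ, Measurable p ∧ (∀ x, 0 ≤ p x) ∧
    (∫ ω, p (M ω) ∂μ) ≤ P ∧
    r = ∫ ω, max 0
      (Real.log (1 + M ω * p (M ω)) - Real.log (1 + G ω * p (M ω))) ∂μ}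


/-- Let `H₁,…,H_K, G` be independent `Exp(1)` random variables (`K ≥ 1`) and
`M = max(H₁,…,H_K)`.  Then `lim_{P̄ → ∞} R⁺_K(P̄) = E[max(0, log (M/G))]`. -/
theorem stmt15 {Ω : Type*} [MeasurableSpace Ω] (μ : Measure Ω)
    [IsProbabilityMeasure μ] {K : ℕ} (hK : 1 ≤ K)
    (H : Fin K → Ω → ℝ) (G : Ω → ℝ)
    (hHm : ∀ i, Measurable (H i)) (hGm : Measurable G)
    (hIndep : iIndepFun
      (fun i : Option (Fin K) => Option.elim i G fun k => H k) μ)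
    (hHd : ∀ i, Measure.map (H i) μ = expMeasure 1)
    (hGd : Measure.map G μ = expMeasure 1) :
    Filter.Tendsto (fun P : ℝ => Rplus μ (fun ω => ⨆ i : Fin K, H i ω) G P)
      Filter.atTop
      (nhds (∫ ω, max 0 (Real.log ((⨆ i : Fin K, H i ω) / G ω)) ∂μ)) := by
  classical
  set M : Ω → ℝ := fun ω => ⨆ i : Fin K, H i ω with hMdef
  have i0 : Fin K := ⟨0, hK⟩
  haveI : Nonempty (Fin K) := ⟨i0⟩
  have hMm : Measurable M := Measurable.iSup hHm
  -- a.e. positivity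
  have haepos : ∀ (f : Ω → ℝ), Measurable f → Measure.map f μ = expMeasure 1 →
      ∀ᵐ ω ∂μ, 0 < f ω := by
    intro f hf hd
    have h0 : μ (f ⁻¹' Set.Iic 0) = 0 := by
      rw [← Measure.map_apply hf measurableSet_Iic, hd, expMeasure_Iic_zero]
    rw [MeasureTheory.ae_iff]
    convert h0 using 2
    ext ω; simp [not_lt]
  have hGpos : ∀ᵐ ω ∂μ, 0 < G ω := haepos G hGm hGd
  have hHpos : ∀ᵐ ω ∂μ, ∀ i, 0 < H i ω := by
    rw [MeasureTheory.ae_all_iff]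
    exact fun i => haepos (H i) (hHm i) (hHd i)
  have hMpos : ∀ᵐ ω ∂μ, 0 < M ω := by
    filter_upwards [hHpos] with ω hω
    exact lt_of_lt_of_le (hω i0) (le_ciSup (f := fun j => H j ω) (Set.finite_range _).bddAbove i0)
  -- integrability
  have hHint : ∀ i, Integrable (H i) μ := by
    intro i
    have h1 : Integrable (id : ℝ → ℝ) (expMeasure 1) := by
      apply exp_integrable_transfer
      have h2 := Real.GammaIntegral_convergent (s := 2) (by norm_num)
      refine h2.congr_fun ?_ measurableSet_Ioi
      intro x hx
      show Real.exp (-x) * x ^ ((2:ℝ) - 1) = id x * Real.exp (-x)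
      rw [show (2:ℝ) - 1 = 1 by norm_num, Real.rpow_one, id_eq]
      ring
    have h2 : Integrable (id : ℝ → ℝ) (Measure.map (H i) μ) := by rw [hHd i]; exact h1
    exact (integrable_map_measure aestronglyMeasurable_id (hHm i).aemeasurable).1 h2
  have hGsint : Integrable (fun ω => 2 / Real.sqrt (G ω)) μ := by
    have h1 : Integrable (fun x : ℝ => 2 / Real.sqrt x) (expMeasure 1) := by
      apply exp_integrable_transfer
      have h2 : MeasureTheory.IntegrableOn
          (fun x : ℝ => 2 * (Real.exp (-x) * x ^ ((1:ℝ)/2 - 1))) (Set.Ioi 0) :=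
        (Real.GammaIntegral_convergent (by norm_num : (0:ℝ) < 1/2)).const_mul 2
      refine h2.congr_fun ?_ measurableSet_Ioi
      intro x hx
      have hx0 : (0:ℝ) < x := hx
      have hrw : x ^ ((1:ℝ)/2 - 1) = (Real.sqrt x)⁻¹ := by
        rw [show (1:ℝ)/2 - 1 = -(1/2) by norm_num, Real.rpow_neg hx0.le, Real.sqrt_eq_rpow]
      show 2 * (Real.exp (-x) * x ^ ((1:ℝ)/2 - 1)) = 2 / Real.sqrt x * Real.exp (-x)
      rw [hrw]
      ring
    have h2 : Integrable (fun x : ℝ => 2 / Real.sqrt x) (Measure.map G μ) := by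
      rw [hGd]; exact h1
    have hmeas : AEStronglyMeasurable (fun x : ℝ => 2 / Real.sqrt x) (Measure.map G μ) :=
      (measurable_const.div Real.continuous_sqrt.measurable).aestronglyMeasurable
    exact (integrable_map_measure hmeas hGm.aemeasurable).1 h2
  have hMint : Integrable M μ := by
    have hsum : Integrable (fun ω => ∑ i : Fin K, H i ω) μ :=
      integrable_finset_sum _ (fun i _ => hHint i)
    refine hsum.mono' hMm.aestronglyMeasurable ?_
    filter_upwards [hHpos] with ω hω
    have h1 : 0 < M ω := lt_of_lt_of_le (hω i0) (le_ciSup (f := fun j => H j ω) (Set.finite_range _).bddAbove i0)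
    rw [Real.norm_eq_abs, abs_of_pos h1]
    exact ciSup_le fun i => Finset.single_le_sum (fun j _ => (hω j).le) (Finset.mem_univ i)
  -- limit function
  set L : Ω → ℝ := fun ω => max 0 (Real.log (M ω / G ω)) with hLdef
  have hLm : Measurable L :=
    measurable_const.max (Real.measurable_log.comp (hMm.div hGm))
  have hLint : Integrable L μ := by
    refine ((hMint.add hGsint).mono' hLm.aestronglyMeasurable ?_)
    filter_upwards [hGpos, hMpos] with ω hg hm
    rw [Real.norm_eq_abs, abs_of_nonneg (le_max_left _ _)]
    rw [hLdef]
    simp only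
    rw [Real.log_div hm.ne' hg.ne']
    have h1 : Real.log (M ω) ≤ M ω := by
      have := Real.log_le_sub_one_of_pos hm; linarith
    have h2 : -Real.log (G ω) ≤ 2 / Real.sqrt (G ω) := by
      set s := Real.sqrt (G ω) with hs
      have hs0 : 0 < s := Real.sqrt_pos.2 hg
      have hs2 : s ^ 2 = G ω := Real.sq_sqrt hg.le
      have h3 : Real.log (G ω) = 2 * Real.log s := by
        rw [← hs2, Real.log_pow]; push_cast; ring
      have h4 : Real.log s⁻¹ ≤ s⁻¹ - 1 := Real.log_le_sub_one_of_pos (by positivity)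
      rw [Real.log_inv] at h4
      rw [h3, div_eq_mul_inv]
      nlinarith
    have hpos : 0 ≤ M ω + 2 / Real.sqrt (G ω) := by positivity
    simp only [Pi.add_apply]
    exact max_le hpos (by linarith)
  -- upper bound for every admissible rate
  have hub : ∀ P : ℝ, ∀ r ∈ {r : ℝ | ∃ p : ℝ → ℝ, Measurable p ∧ (∀ x, 0 ≤ p x) ∧
      (∫ ω, p (M ω) ∂μ) ≤ P ∧
      r = ∫ ω, max 0
        (Real.log (1 + M ω * p (M ω)) - Real.log (1 + G ω * p (M ω))) ∂μ},
      r ≤ ∫ ω, L ω ∂μ := by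
    rintro P r ⟨p, hpm, hp0, -, rfl⟩
    apply integral_mono_of_nonneg (Filter.Eventually.of_forall fun ω => le_max_left _ _) hLint
    filter_upwards [hGpos, hMpos] with ω hg hm
    exact key_ineq hm hg (hp0 _)
  -- DCT
  have hDCT : Filter.Tendsto
      (fun P : ℝ => ∫ ω, max 0 (Real.log (1 + M ω * P) - Real.log (1 + G ω * P)) ∂μ)
      atTop (nhds (∫ ω, L ω ∂μ)) := by
    apply MeasureTheory.tendsto_integral_filter_of_dominated_convergence L
    · filter_upwards with P
      exact (measurable_const.max
        ((Real.measurable_log.comp (measurable_const.add (hMm.mul_const P))).sub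
          (Real.measurable_log.comp (measurable_const.add (hGm.mul_const P))))).aestronglyMeasurable
    · filter_upwards [Filter.eventually_ge_atTop (0:ℝ)] with P hP
      filter_upwards [hGpos, hMpos] with ω hg hm
      rw [Real.norm_eq_abs, abs_of_nonneg (le_max_left _ _)]
      exact key_ineq hm hg hP
    · exact hLint
    · filter_upwards [hGpos, hMpos] with ω hg hm
      exact key_tendsto hm hg
  -- membership of the constant power allocation
  have hmem : ∀ P : ℝ, 0 ≤ P →
      (∫ ω, max 0 (Real.log (1 + M ω * P) - Real.log (1 + G ω * P)) ∂μ) ∈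
      {r : ℝ | ∃ p : ℝ → ℝ, Measurable p ∧ (∀ x, 0 ≤ p x) ∧
        (∫ ω, p (M ω) ∂μ) ≤ P ∧
        r = ∫ ω, max 0
          (Real.log (1 + M ω * p (M ω)) - Real.log (1 + G ω * p (M ω))) ∂μ} := by
    intro P hP
    exact ⟨fun _ => P, measurable_const, fun _ => hP, by simp, rfl⟩
  have hsq1 : ∀ᶠ P in atTop,
      (∫ ω, max 0 (Real.log (1 + M ω * P) - Real.log (1 + G ω * P)) ∂μ) ≤ Rplus μ M G P := by
    filter_upwards [Filter.eventually_ge_atTop (0:ℝ)] with P hP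
    exact le_csSup ⟨∫ ω, L ω ∂μ, fun r hr => hub P r hr⟩ (hmem P hP)
  have hsq2 : ∀ᶠ P in atTop, Rplus μ M G P ≤ ∫ ω, L ω ∂μ := by
    filter_upwards [Filter.eventually_ge_atTop (0:ℝ)] with P hP
    exact csSup_le ⟨_, hmem P hP⟩ (hub P)
  exact tendsto_of_tendsto_of_tendsto_of_le_of_le' hDCT tendsto_const_nhds hsq1 hsq2
end

section
/- Let K ≥ 1 and let H₁,…,H_K, G be independent Exp(1) random variables with M = max(H₁,…,H_K). Then lim_{P̄ → ∞} R⁻_K(P̄) = sup_{T ≥ 0} E[log(M/G)·1{M ≥ T}]. -/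
open MeasureTheory ProbabilityTheory Real Filter

noncomputable section SecAux
open Set

instance nu_prob : IsProbabilityMeasure (expMeasure 1) := isProbabilityMeasure_expMeasure one_pos

lemma nu_ac : (expMeasure 1) ≪ (volume : Measure ℝ) := by
  rw [expMeasure, gammaMeasure]
  exact withDensity_absolutelyContinuous _ _

lemma nu_ae_pos : ∀ᵐ g ∂(expMeasure 1), 0 < g := by
  have h1 : (expMeasure 1) (Iic 0) = 0 := by
    have h2 : Iic (0:ℝ) = Iio 0 ∪ {0} := by
      ext x; simp [le_iff_lt_or_eq]
    have h3 : (expMeasure 1) (Iio 0) = 0 := by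
      rw [expMeasure, gammaMeasure, withDensity_apply _ measurableSet_Iio]
      exact lintegral_gammaPDF_of_nonpos le_rfl
    rw [h2]
    exact le_antisymm ((measure_union_le _ _).trans (by
      rw [h3, nu_ac (measure_singleton 0)]; simp)) (zero_le)
  have : ∀ᵐ (g : ℝ) ∂(expMeasure 1), g ∈ (Iic (0:ℝ))ᶜ := compl_mem_ae_iff.2 h1
  filter_upwards [this] with x hx
  simpa using hx

lemma expPDF_toReal (x : ℝ) :
    ((exponentialPDF 1 x).toReal) = if 0 ≤ x then rexp (-x) else 0 := by
  rw [exponentialPDF_eq]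
  split_ifs with h
  · rw [ENNReal.toReal_ofReal (by positivity)]; norm_num
  · simp

lemma integrable_nu_iff {f : ℝ → ℝ} :
    Integrable f (expMeasure 1) ↔
      Integrable (fun x => f x * (if 0 ≤ x then rexp (-x) else 0)) volume := by
  have hm : Measurable (gammaPDF 1 1) := (measurable_gammaPDFReal 1 1).ennreal_ofReal
  rw [expMeasure, gammaMeasure,
    integrable_withDensity_iff hm (Eventually.of_forall fun x => ENNReal.ofReal_lt_top)]
  refine integrable_congr (Eventually.of_forall fun x => ?_)
  show f x * (gammaPDF 1 1 x).toReal = f x * (if 0 ≤ x then rexp (-x) else 0)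
  rw [show ((gammaPDF 1 1 x).toReal) = if 0 ≤ x then rexp (-x) else 0 from expPDF_toReal x]

lemma integrable_id_nu : Integrable (fun x : ℝ => x) (expMeasure 1) := by
  rw [integrable_nu_iff]
  have heq : (fun x : ℝ => x * (if 0 ≤ x then rexp (-x) else 0))
      = (Ici (0:ℝ)).indicator (fun x => x * rexp (-x)) := by
    ext x
    by_cases h : (0:ℝ) ≤ x <;> simp [indicator, h]
  rw [heq, integrable_indicator_iff measurableSet_Ici, integrableOn_Ici_iff_integrableOn_Ioi]
  refine (Real.GammaIntegral_convergent (by norm_num : (0:ℝ) < 2)).congr_fun ?_ measurableSet_Ioi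
  intro x hx
  show rexp (-x) * x ^ ((2:ℝ) - 1) = x * rexp (-x)
  rw [show ((2:ℝ) - 1) = 1 by norm_num, Real.rpow_one, mul_comm]

lemma integrable_abs_log_nu : Integrable (fun x : ℝ => |Real.log x|) (expMeasure 1) := by
  rw [integrable_nu_iff]
  have hgint : Integrable ((Ioi (0:ℝ)).indicator
      (fun x => 2 * (rexp (-x) * x ^ ((1:ℝ)/2 - 1)) + rexp (-x) * x ^ ((2:ℝ) - 1))) volume := by
    rw [integrable_indicator_iff measurableSet_Ioi]
    exact (((Real.GammaIntegral_convergent (by norm_num : (0:ℝ) < 1/2)).const_mul 2).add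
      (Real.GammaIntegral_convergent (by norm_num : (0:ℝ) < 2)))
  refine hgint.mono' ?_ (Eventually.of_forall fun x => ?_)
  · exact ((measurable_log.abs.mul ((measurable_id.neg.exp).ite measurableSet_Ici
      measurable_const)).aestronglyMeasurable)
  · by_cases hx : 0 < x
    · rw [if_pos hx.le, Set.indicator_of_mem (show x ∈ Ioi (0:ℝ) from hx)]
      have h1 : |Real.log x| ≤ 2 * x ^ (-(1:ℝ)/2) + x := by
        rcases le_or_gt 1 x with h | h
        · rw [abs_of_nonneg (Real.log_nonneg h)]
          have := Real.log_le_sub_one_of_pos (lt_of_lt_of_le one_pos h)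
          nlinarith [Real.rpow_nonneg (le_of_lt (lt_of_lt_of_le one_pos h)) (-(1:ℝ)/2)]
        · rw [abs_of_nonpos (Real.log_nonpos hx.le h.le)]
          have h2 : Real.log (x ^ (-(1:ℝ)/2)) ≤ x ^ (-(1:ℝ)/2) - 1 :=
            Real.log_le_sub_one_of_pos (Real.rpow_pos_of_pos hx _)
          rw [Real.log_rpow hx] at h2
          nlinarith
      have hexp : (0:ℝ) < rexp (-x) := Real.exp_pos _
      rw [Real.norm_eq_abs, abs_mul, abs_of_nonneg hexp.le, abs_abs]
      have h2 : ((1:ℝ)/2 - 1) = -(1:ℝ)/2 := by norm_num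
      have h3 : x ^ ((2:ℝ) - 1) = x := by
        rw [show ((2:ℝ) - 1) = 1 by norm_num, rpow_one]
      rw [h2, h3]
      have hexp1 : rexp (-x) ≤ 1 := Real.exp_le_one_iff.2 (by linarith)
      nlinarith [Real.rpow_nonneg hx.le (-(1:ℝ)/2), abs_nonneg (Real.log x)]
    · rw [Set.indicator_of_notMem (by simpa using hx)]
      rcases eq_or_lt_of_le (le_of_not_gt hx) with h | h
      · simp [h, Real.log_zero]
      · rw [if_neg (not_le.2 h)]; simp

lemma integrable_nu_of_bound {f : ℝ → ℝ} (hf : AEStronglyMeasurable f (expMeasure 1))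
    (C₁ C₂ C₃ : ℝ) (h : ∀ x : ℝ, 0 < x → ‖f x‖ ≤ C₁ * |Real.log x| + C₂ * x + C₃) :
    Integrable f (expMeasure 1) := by
  have : IsProbabilityMeasure (expMeasure 1) := nu_prob
  have hbint : Integrable (fun x : ℝ => C₁ * |Real.log x| + C₂ * x + C₃) (expMeasure 1) :=
    ((integrable_abs_log_nu.const_mul C₁).add (integrable_id_nu.const_mul C₂)).add
      (integrable_const C₃)
  exact hbint.mono' hf (nu_ae_pos.mono fun x hx => h x hx)

def Lfun (ρ : ℝ) : ℝ := ∫ g, Real.log (1 + g * ρ) ∂(expMeasure 1)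
def Bfun (ρ : ℝ) : ℝ := ∫ g, g / (1 + g * ρ) ∂(expMeasure 1)
def cE : ℝ := ∫ g, Real.log g ∂(expMeasure 1)

lemma integrable_log_nu : Integrable Real.log (expMeasure 1) :=
  integrable_abs_log_nu.mono' measurable_log.aestronglyMeasurable
    (Eventually.of_forall fun x => by simp [Real.norm_eq_abs])

lemma integrable_log_one_add {ρ : ℝ} (hρ : 0 ≤ ρ) :
    Integrable (fun g => Real.log (1 + g * ρ)) (expMeasure 1) := by
  refine integrable_nu_of_bound ?_ 0 ρ 0 fun x hx => ?_
  · exact (measurable_log.comp (measurable_const.add (measurable_id.mul_const ρ))).aestronglyMeasurable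
  · have h1 : (0:ℝ) < 1 + x * ρ := by nlinarith
    have h2 : Real.log (1 + x * ρ) ≤ x * ρ := by
      have := Real.log_le_sub_one_of_pos h1; linarith
    have h3 : 0 ≤ Real.log (1 + x * ρ) := Real.log_nonneg (by nlinarith)
    rw [Real.norm_eq_abs, abs_of_nonneg h3]
    nlinarith

lemma integrable_ratio {ρ : ℝ} (hρ : 0 ≤ ρ) :
    Integrable (fun g => g / (1 + g * ρ)) (expMeasure 1) := by
  refine integrable_nu_of_bound ?_ 0 1 0 fun x hx => ?_
  · exact (measurable_id.div (measurable_const.add (measurable_id.mul_const ρ))).aestronglyMeasurable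
  · have h1 : (0:ℝ) < 1 + x * ρ := by nlinarith
    have h2 : x / (1 + x * ρ) ≤ x := by
      rw [div_le_iff₀ h1]; nlinarith [mul_nonneg (mul_nonneg hx.le hx.le) hρ]
    rw [Real.norm_eq_abs, abs_of_nonneg (by positivity)]
    nlinarith

lemma integrable_ratio_sq {ρ : ℝ} (hρ : 0 < ρ) :
    Integrable (fun g => (g / (1 + g * ρ))^2) (expMeasure 1) := by
  refine integrable_nu_of_bound ?_ 0 0 ((1/ρ)^2) fun x hx => ?_
  · exact (((measurable_id.div (measurable_const.add (measurable_id.mul_const ρ))).pow_const 2)).aestronglyMeasurable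
  · have h1 : (0:ℝ) < 1 + x * ρ := by nlinarith
    have h2 : x / (1 + x * ρ) ≤ 1/ρ := by
      rw [div_le_div_iff₀ h1 hρ]; nlinarith
    have h3 : (0:ℝ) ≤ x / (1 + x * ρ) := by positivity
    rw [Real.norm_eq_abs, abs_of_nonneg (by positivity)]
    nlinarith

lemma ratio_le {a x ρ₀ : ℝ} (ha : 0 < a) (hρ₀ : 0 < ρ₀) (hx : x ∈ Metric.ball ρ₀ (ρ₀/2)) :
    a / (1 + a * x) ≤ 2 / ρ₀ ∧ (0:ℝ) < 1 + a * x := by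
  rw [Metric.mem_ball, Real.dist_eq, abs_lt] at hx
  have hx1 : ρ₀/2 < x := by linarith
  have h1 : (0:ℝ) < 1 + a * x := by nlinarith
  refine ⟨?_, h1⟩
  rw [div_le_div_iff₀ h1 hρ₀]
  nlinarith

lemma hasDerivAt_ratio (a x : ℝ) (h1 : (0:ℝ) < 1 + a * x) :
    HasDerivAt (fun y => Real.log (1 + a * y)) (a / (1 + a * x)) x := by
  have h := (((hasDerivAt_id x).const_mul a).const_add 1).log h1.ne'
  simpa [mul_comm] using h

lemma hasDerivAt_ratio' (a x : ℝ) (h1 : (0:ℝ) < 1 + a * x) :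
    HasDerivAt (fun y => a / (1 + a * y)) (-(a / (1 + a * x))^2) x := by
  have h := (hasDerivAt_const x a).div (((hasDerivAt_id x).const_mul a).const_add 1) h1.ne'
  exact h.congr_deriv (by simp only [id]; rw [div_pow]; ring)

lemma hasDerivAt_L {ρ₀ : ℝ} (hρ₀ : 0 < ρ₀) : HasDerivAt Lfun (Bfun ρ₀) ρ₀ := by
  have key := hasDerivAt_integral_of_dominated_loc_of_lip
    (F := fun x a => Real.log (1 + a * x)) (F' := fun a => a / (1 + a * ρ₀))
    (x₀ := ρ₀) (bound := fun _ => 2/ρ₀) (μ := expMeasure 1)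
    (Metric.ball_mem_nhds ρ₀ (half_pos hρ₀))
    (Eventually.of_forall fun x =>
      (measurable_log.comp (measurable_const.add (measurable_id.mul_const x))).aestronglyMeasurable)
    (integrable_log_one_add hρ₀.le)
    (measurable_id.div (measurable_const.add (measurable_id.mul_const ρ₀))).aestronglyMeasurable
    ?_ (integrable_const _) ?_
  · exact key.2
  · filter_upwards [nu_ae_pos] with a ha
    refine (convex_ball ρ₀ (ρ₀/2)).lipschitzOnWith_of_nnnorm_hasDerivWithin_le
      (f' := fun x => a / (1 + a * x)) (fun x hx => ?_) (fun x hx => ?_)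
    · exact (hasDerivAt_ratio a x (ratio_le ha hρ₀ hx).2).hasDerivWithinAt
    · obtain ⟨hle, hpos⟩ := ratio_le ha hρ₀ hx
      rw [← NNReal.coe_le_coe]
      show |a / (1 + a * x)| ≤ |2/ρ₀|
      rw [abs_of_nonneg (by positivity : (0:ℝ) ≤ a / (1 + a * x)),
        abs_of_nonneg (by positivity : (0:ℝ) ≤ 2/ρ₀)]
      exact hle
  · filter_upwards [nu_ae_pos] with a ha
    exact hasDerivAt_ratio a ρ₀ (by nlinarith)

lemma hasDerivAt_B {ρ₀ : ℝ} (hρ₀ : 0 < ρ₀) :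
    HasDerivAt Bfun (-∫ g, (g / (1 + g * ρ₀))^2 ∂(expMeasure 1)) ρ₀ := by
  have key := hasDerivAt_integral_of_dominated_loc_of_lip
    (F := fun x a => a / (1 + a * x)) (F' := fun a => -(a / (1 + a * ρ₀))^2)
    (x₀ := ρ₀) (bound := fun _ => (2/ρ₀)^2) (μ := expMeasure 1)
    (Metric.ball_mem_nhds ρ₀ (half_pos hρ₀))
    (Eventually.of_forall fun x =>
      (measurable_id.div (measurable_const.add (measurable_id.mul_const x))).aestronglyMeasurable)
    (integrable_ratio hρ₀.le)
    (((measurable_id.div (measurable_const.add (measurable_id.mul_const ρ₀))).pow_const 2).neg).aestronglyMeasurable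
    ?_ (integrable_const _) ?_
  · have h2 := key.2
    have : (∫ a, -(a / (1 + a * ρ₀))^2 ∂(expMeasure 1))
        = -∫ g, (g / (1 + g * ρ₀))^2 ∂(expMeasure 1) := by
      rw [integral_neg]
    rwa [this] at h2
  · filter_upwards [nu_ae_pos] with a ha
    refine (convex_ball ρ₀ (ρ₀/2)).lipschitzOnWith_of_nnnorm_hasDerivWithin_le
      (f' := fun x => -(a / (1 + a * x))^2) (fun x hx => ?_) (fun x hx => ?_)
    · exact (hasDerivAt_ratio' a x (ratio_le ha hρ₀ hx).2).hasDerivWithinAt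
    · obtain ⟨hle, hpos⟩ := ratio_le ha hρ₀ hx
      rw [← NNReal.coe_le_coe]
      show |-(a / (1 + a * x))^2| ≤ |(2/ρ₀)^2|
      rw [abs_neg, abs_of_nonneg (sq_nonneg _), abs_of_nonneg (sq_nonneg _)]
      have h3 : (0:ℝ) ≤ a / (1 + a * x) := by positivity
      have h4 : (0:ℝ) ≤ 2/ρ₀ := by positivity
      nlinarith
  · filter_upwards [nu_ae_pos] with a ha
    exact hasDerivAt_ratio' a ρ₀ (by nlinarith)

lemma variance_strict {s : ℝ} (hs : 0 < s) :
    (Bfun s)^2 < ∫ g, (g / (1 + g * s))^2 ∂(expMeasure 1) := by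
  set b := Bfun s with hb
  have hX : Integrable (fun g => g / (1 + g * s)) (expMeasure 1) := integrable_ratio hs.le
  have hX2 : Integrable (fun g => (g / (1 + g * s))^2) (expMeasure 1) := integrable_ratio_sq hs
  have hexpand : (fun g => (g / (1 + g * s) - b)^2)
      = fun g => ((g / (1 + g * s))^2 - (2*b) * (g / (1 + g * s)) + b^2) := by
    ext g; ring
  have hh : Integrable (fun g => (g / (1 + g * s) - b)^2) (expMeasure 1) := by
    rw [hexpand]
    exact (hX2.sub (hX.const_mul (2*b))).add (integrable_const _)
  have hI2 : Integrable (fun g => (2*b) * (g / (1 + g * s))) (expMeasure 1) :=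
    hX.const_mul (2*b)
  have hI1 : Integrable (fun g => (g / (1 + g * s))^2 - (2*b) * (g / (1 + g * s)))
      (expMeasure 1) := hX2.sub hI2
  have hBX : ∫ g, g / (1 + g * s) ∂(expMeasure 1) = b := rfl
  have hint : ∫ g, (g / (1 + g * s) - b)^2 ∂(expMeasure 1)
      = (∫ g, (g / (1 + g * s))^2 ∂(expMeasure 1)) - b^2 := by
    rw [hexpand, integral_add hI1 (integrable_const _),
      integral_sub hX2 hI2, MeasureTheory.integral_const_mul, integral_const]
    have hμ : (expMeasure 1).real Set.univ = 1 := by simp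
    rw [hμ, hBX, one_smul]
    ring
  by_contra hc
  push_neg at hc
  have h0 : ∫ g, (g / (1 + g * s) - b)^2 ∂(expMeasure 1) = 0 := by
    have h1 : (0:ℝ) ≤ ∫ g, (g / (1 + g * s) - b)^2 ∂(expMeasure 1) :=
      integral_nonneg fun g => sq_nonneg _
    rw [hint] at h1 ⊢
    linarith
  have hz := (integral_eq_zero_iff_of_nonneg_ae
    (Eventually.of_forall fun g => sq_nonneg _) hh).1 h0
  have hE : ∀ᵐ g ∂(expMeasure 1), 0 < g ∧ g / (1 + g * s) = b := by
    filter_upwards [nu_ae_pos, hz] with g hg hzg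
    refine ⟨hg, ?_⟩
    have : (g / (1 + g * s) - b)^2 = 0 := hzg
    have := pow_eq_zero_iff (n := 2) (by norm_num) |>.1 this
    linarith [sub_eq_zero.1 this]
  set E : Set ℝ := {g | 0 < g ∧ g / (1 + g * s) = b} with hEdef
  have hEc : (expMeasure 1) Eᶜ = 0 := by
    rw [Set.compl_def]
    exact ae_iff.1 hE
  have hsub : E ⊆ {b / (1 - b * s)} := by
    intro g hg
    obtain ⟨hg0, hgb⟩ := hg
    have h1 : (0:ℝ) < 1 + g * s := by nlinarith
    have h2 : g = b * (1 + g * s) := by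
      rw [div_eq_iff h1.ne'] at hgb
      exact hgb
    have h3 : g * (1 - b * s) = b := by linear_combination h2
    have h4 : 1 - b * s ≠ 0 := by
      intro h
      have hb0 : b = 0 := by rw [h, mul_zero] at h3; linarith
      rw [hb0] at h; simp at h
    have : g = b / (1 - b * s) := by
      rw [eq_div_iff h4]; exact h3
    simp [this]
  have h1 : (expMeasure 1) E = 0 :=
    le_antisymm (le_trans (measure_mono hsub) (le_of_eq (nu_ac (measure_singleton _)))) (zero_le)
  have : (expMeasure 1) Set.univ ≤ (expMeasure 1) E + (expMeasure 1) Eᶜ := by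
    rw [← Set.union_compl_self E]
    exact measure_union_le _ _
  rw [h1, hEc, measure_univ] at this
  simp at this

lemma forward_invariant {f : ℝ → ℝ} {ρ₀ : ℝ}
    (hc : ∀ x, ρ₀ ≤ x → ContinuousAt f x)
    (hderiv : ∀ x, ρ₀ ≤ x → f x = 0 → ∃ d, d < 0 ∧ HasDerivAt f d x)
    (h0 : f ρ₀ ≤ 0) : ∀ x, ρ₀ ≤ x → f x ≤ 0 := by
  intro ρ₁ hρ₁
  by_contra hpos
  push_neg at hpos
  have hlt : ρ₀ < ρ₁ := by
    rcases eq_or_lt_of_le hρ₁ with h | h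
    · exfalso; rw [← h] at hpos; linarith
    · exact h
  set S : Set ℝ := {x | x ∈ Set.Icc ρ₀ ρ₁ ∧ f x ≤ 0} with hSdef
  have hne : S.Nonempty := ⟨ρ₀, ⟨Set.left_mem_Icc.2 hρ₁, h0⟩⟩
  have hbdd : BddAbove S := ⟨ρ₁, fun x hx => hx.1.2⟩
  set s := sSup S with hsdef
  have hs_mem_Icc : s ∈ Set.Icc ρ₀ ρ₁ :=
    ⟨le_csSup hbdd ⟨Set.left_mem_Icc.2 hρ₁, h0⟩, csSup_le hne fun x hx => hx.1.2⟩
  have hfs : f s ≤ 0 := by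
    obtain ⟨u, hu_mono, hu_tendsto, hu_mem⟩ := exists_seq_tendsto_sSup hne hbdd
    have hcs : ContinuousAt f s := hc s hs_mem_Icc.1
    have : Filter.Tendsto (fun n => f (u n)) Filter.atTop (nhds (f s)) :=
      hcs.tendsto.comp hu_tendsto
    exact le_of_tendsto this (Filter.Eventually.of_forall fun n => (hu_mem n).2)
  have hsρ₁ : s < ρ₁ := by
    rcases eq_or_lt_of_le hs_mem_Icc.2 with h | h
    · exfalso; rw [h] at hfs; linarith
    · exact h
  have hkey : ∀ᶠ x in nhdsWithin s (Set.Ioi s), f x < 0 := by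
    rcases eq_or_lt_of_le hfs with h | h
    · obtain ⟨d, hd, hder⟩ := hderiv s hs_mem_Icc.1 h
      have hslope := hasDerivAt_iff_tendsto_slope.1 hder
      have hslope' : Filter.Tendsto (slope f s) (nhdsWithin s (Set.Ioi s)) (nhds d) :=
        hslope.mono_left (nhdsWithin_mono s fun x hx => ne_of_gt hx)
      have hev : ∀ᶠ x in nhdsWithin s (Set.Ioi s), slope f s x < 0 :=
        hslope' (Iio_mem_nhds hd)
      filter_upwards [hev, self_mem_nhdsWithin] with x hx hx'
      have hxs : s < x := hx'
      rw [slope_def_field] at hx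
      rcases div_neg_iff.1 hx with ⟨h1, h2⟩ | ⟨h1, h2⟩
      · linarith
      · linarith
    · have hev : ∀ᶠ x in nhds s, f x < 0 := (hc s hs_mem_Icc.1).tendsto (Iio_mem_nhds h)
      exact nhdsWithin_le_nhds hev
  have hIoo : Set.Ioo s ρ₁ ∈ nhdsWithin s (Set.Ioi s) :=
    Ioo_mem_nhdsGT_of_mem ⟨le_refl s, hsρ₁⟩
  obtain ⟨x, hx1, hx2⟩ := (hkey.and (Filter.eventually_of_mem hIoo fun x hx => hx)).exists
  have hxS : x ∈ S := ⟨⟨le_trans hs_mem_Icc.1 hx2.1.le, hx2.2.le⟩, hx1.le⟩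
  have : x ≤ s := le_csSup hbdd hxS
  linarith [hx2.1]

lemma Lfun_zero : Lfun 0 = 0 := by
  unfold Lfun
  simp

lemma Lfun_continuousOn {ρ : ℝ} (hρ : 0 < ρ) : ContinuousOn Lfun (Set.Icc 0 ρ) := by
  intro x hx
  rcases eq_or_lt_of_le hx.1 with h | h
  · -- x = 0
    have : ContinuousWithinAt (fun t => ∫ a, Real.log (1 + a * t) ∂(expMeasure 1))
        (Set.Icc 0 ρ) x := by
      refine continuousWithinAt_of_dominated (bound := fun a => a * ρ) ?_ ?_ ?_ ?_
      · exact Filter.Eventually.of_forall fun t =>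
          (measurable_log.comp (measurable_const.add (measurable_id.mul_const t))).aestronglyMeasurable
      · filter_upwards [self_mem_nhdsWithin] with t ht
        filter_upwards [nu_ae_pos] with a ha
        have h1 : (0:ℝ) < 1 + a * t := by nlinarith [ht.1, ht.2]
        have h2 : Real.log (1 + a * t) ≤ a * t := by
          have := Real.log_le_sub_one_of_pos h1; linarith
        have h3 : 0 ≤ Real.log (1 + a * t) := Real.log_nonneg (by nlinarith [ht.1])
        rw [Real.norm_eq_abs, abs_of_nonneg h3]
        nlinarith [ht.1, ht.2]
      · exact integrable_id_nu.mul_const ρ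
      · filter_upwards [nu_ae_pos] with a ha
        refine ContinuousAt.continuousWithinAt ?_
        have h1 : (0:ℝ) < 1 + a * x := by rw [← h]; simp
        exact ((continuous_const.add (continuous_const.mul continuous_id)).continuousAt).log h1.ne'
    exact this
  · exact ((hasDerivAt_L h).differentiableAt.continuousAt).continuousWithinAt

lemma tendsto_psi {m : ℝ} (hm : 0 < m) :
    Filter.Tendsto (fun ρ => Real.log (1 + m * ρ) - Lfun ρ) Filter.atTop
      (nhds (Real.log m - cE)) := by
  have hA : Filter.Tendsto (fun ρ : ℝ => Real.log (m + 1/ρ)) Filter.atTop (nhds (Real.log m)) := by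
    have h1 : Filter.Tendsto (fun ρ : ℝ => m + 1/ρ) Filter.atTop (nhds m) := by
      have h2 : Filter.Tendsto (fun ρ : ℝ => 1/ρ) Filter.atTop (nhds 0) := by
        simpa [one_div] using tendsto_inv_atTop_zero
      simpa using (tendsto_const_nhds.add h2)
    exact ((Real.continuousAt_log hm.ne').tendsto.comp (by simpa using h1))
  have hB : Filter.Tendsto (fun ρ : ℝ => ∫ g, Real.log (g + 1/ρ) ∂(expMeasure 1))
      Filter.atTop (nhds cE) := by
    refine tendsto_integral_filter_of_dominated_convergence
      (bound := fun g => |Real.log g| + g) ?_ ?_ ?_ ?_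
    · exact Filter.Eventually.of_forall fun ρ =>
        (measurable_log.comp (measurable_id.add_const (1/ρ))).aestronglyMeasurable
    · filter_upwards [Filter.eventually_ge_atTop (1:ℝ)] with ρ hρ
      filter_upwards [nu_ae_pos] with g hg
      have hρ0 : (0:ℝ) < ρ := by linarith
      have hinv : 0 < 1/ρ := by positivity
      have hinv1 : 1/ρ ≤ 1 := by rw [div_le_one hρ0]; linarith
      rw [Real.norm_eq_abs]
      rcases le_or_gt 1 (g + 1/ρ) with h | h
      · rw [abs_of_nonneg (Real.log_nonneg h)]
        have h2 : Real.log (g + 1/ρ) ≤ Real.log (g + 1) :=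
          Real.log_le_log (by linarith) (by linarith)
        have h3 : Real.log (g + 1) ≤ g := by
          have := Real.log_le_sub_one_of_pos (by linarith : (0:ℝ) < g + 1); linarith
        have h4 : (0:ℝ) ≤ |Real.log g| := abs_nonneg _
        linarith
      · rw [abs_of_nonpos (Real.log_nonpos (by positivity) h.le)]
        have h2 : Real.log g ≤ Real.log (g + 1/ρ) := Real.log_le_log hg (by linarith)
        have h3 : -Real.log (g + 1/ρ) ≤ -Real.log g := by linarith
        have h4 : -Real.log g ≤ |Real.log g| := neg_le_abs _
        linarith
    · exact integrable_abs_log_nu.add integrable_id_nu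
    · filter_upwards [nu_ae_pos] with g hg
      have h1 : Filter.Tendsto (fun ρ : ℝ => g + 1/ρ) Filter.atTop (nhds g) := by
        have h2 : Filter.Tendsto (fun ρ : ℝ => 1/ρ) Filter.atTop (nhds 0) := by
          simpa [one_div] using tendsto_inv_atTop_zero
        simpa using (tendsto_const_nhds.add h2)
      exact (Real.continuousAt_log hg.ne').tendsto.comp (by simpa using h1)
  have heq : ∀ᶠ ρ in Filter.atTop, Real.log (1 + m * ρ) - Lfun ρ
      = Real.log (m + 1/ρ) - ∫ g, Real.log (g + 1/ρ) ∂(expMeasure 1) := by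
    filter_upwards [Filter.eventually_gt_atTop (0:ℝ)] with ρ hρ
    have h1 : Real.log (1 + m * ρ) - Real.log ρ = Real.log (m + 1/ρ) := by
      rw [← Real.log_div (by nlinarith) hρ.ne']
      congr 1
      field_simp
      ring
    have h2 : Lfun ρ - Real.log ρ = ∫ g, Real.log (g + 1/ρ) ∂(expMeasure 1) := by
      unfold Lfun
      have hconst : ∫ (_ : ℝ), Real.log ρ ∂(expMeasure 1) = Real.log ρ := by simp
      rw [← hconst, ← integral_sub (integrable_log_one_add hρ.le) (integrable_const _)]
      refine integral_congr_ae ?_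
      filter_upwards [nu_ae_pos] with g hg
      show Real.log (1 + g * ρ) - Real.log ρ = Real.log (g + 1/ρ)
      rw [← Real.log_div (by nlinarith) hρ.ne']
      congr 1
      field_simp
      ring
    linarith
  refine Filter.Tendsto.congr' (Filter.EventuallyEq.symm heq) ?_
  exact hA.sub hB

lemma psi_le {m : ℝ} (hm : 0 < m) {ρ : ℝ} (hρ : 0 ≤ ρ) :
    Real.log (1 + m * ρ) - Lfun ρ ≤ max 0 (Real.log m - cE) := by
  rcases eq_or_lt_of_le hρ with hρ0 | hρpos
  · rw [← hρ0]
    simp [Lfun_zero]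
  by_cases hcase : ∃ ρ₀, 0 < ρ₀ ∧ ρ₀ ≤ ρ ∧ Bfun ρ₀ ≤ m / (1 + m * ρ₀)
  · obtain ⟨ρ₀, hρ₀pos, hρ₀le, hBA⟩ := hcase
    -- forward invariance: B ≤ A on [ρ₀, ∞)
    have hpos : ∀ x : ℝ, ρ₀ ≤ x → (0:ℝ) < 1 + m * x := fun x hx => by nlinarith
    have hinv : ∀ x, ρ₀ ≤ x → Bfun x - m / (1 + m * x) ≤ 0 := by
      refine forward_invariant (f := fun x => Bfun x - m / (1 + m * x)) ?_ ?_ (by linarith)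
      · intro x hx
        have hx0 : 0 < x := lt_of_lt_of_le hρ₀pos hx
        exact ((hasDerivAt_B hx0).sub (hasDerivAt_ratio' m x (hpos x hx))).differentiableAt.continuousAt
      · intro x hx hfx
        have hx0 : 0 < x := lt_of_lt_of_le hρ₀pos hx
        refine ⟨(-∫ g, (g / (1 + g * x))^2 ∂(expMeasure 1)) - (-(m / (1 + m * x))^2), ?_,
          (hasDerivAt_B hx0).sub (hasDerivAt_ratio' m x (hpos x hx))⟩
        have hBx : Bfun x = m / (1 + m * x) := by linarith [sub_eq_zero.1 hfx]
        have := variance_strict hx0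
        rw [hBx] at this
        nlinarith [this]
    -- ψ is monotone on [ρ₀, ∞)
    have hψmono : MonotoneOn (fun x => Real.log (1 + m * x) - Lfun x) (Set.Ici ρ₀) := by
      refine monotoneOn_of_deriv_nonneg (convex_Ici ρ₀) ?_ ?_ ?_
      · intro x hx
        exact (((hasDerivAt_ratio m x (hpos x hx)).sub (hasDerivAt_L
          (lt_of_lt_of_le hρ₀pos hx))).differentiableAt.continuousAt).continuousWithinAt
      · intro x hx
        rw [interior_Ici] at hx
        exact ((hasDerivAt_ratio m x (hpos x hx.le)).sub
          (hasDerivAt_L (lt_of_lt_of_le hρ₀pos hx.le))).differentiableAt.differentiableWithinAt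
      · intro x hx
        rw [interior_Ici] at hx
        have hd := ((hasDerivAt_ratio m x (hpos x hx.le)).sub
          (hasDerivAt_L (lt_of_lt_of_le hρ₀pos hx.le))).deriv
        rw [show deriv (fun x => Real.log (1 + m * x) - Lfun x) x = _ from hd]
        have := hinv x hx.le
        linarith
    have hle : Real.log (1 + m * ρ) - Lfun ρ ≤ Real.log m - cE := by
      refine ge_of_tendsto (tendsto_psi hm) ?_
      filter_upwards [Filter.eventually_ge_atTop ρ] with x hx
      exact hψmono (Set.mem_Ici.2 hρ₀le) (Set.mem_Ici.2 (le_trans hρ₀le hx)) hx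
    exact le_trans hle (le_max_right _ _)
  · push_neg at hcase
    -- A < B on (0, ρ], so ψ is antitone on [0, ρ]
    have hψanti : AntitoneOn (fun x => Real.log (1 + m * x) - Lfun x) (Set.Icc 0 ρ) := by
      refine antitoneOn_of_deriv_nonpos (convex_Icc 0 ρ) ?_ ?_ ?_
      · refine ContinuousOn.sub ?_ (Lfun_continuousOn hρpos)
        intro x hx
        have h1 : (0:ℝ) < 1 + m * x := by nlinarith [hx.1]
        exact (((continuous_const.add (continuous_const.mul continuous_id)).continuousAt).log
          h1.ne').continuousWithinAt
      · intro x hx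
        rw [interior_Icc] at hx
        have h1 : (0:ℝ) < 1 + m * x := by nlinarith [hx.1]
        exact ((hasDerivAt_ratio m x h1).sub
          (hasDerivAt_L hx.1)).differentiableAt.differentiableWithinAt
      · intro x hx
        rw [interior_Icc] at hx
        have h1 : (0:ℝ) < 1 + m * x := by nlinarith [hx.1]
        have hd := ((hasDerivAt_ratio m x h1).sub (hasDerivAt_L hx.1)).deriv
        rw [show deriv (fun x => Real.log (1 + m * x) - Lfun x) x = _ from hd]
        have := hcase x hx.1 hx.2.le
        linarith
    have h0 : Real.log (1 + m * ρ) - Lfun ρ ≤ Real.log (1 + m * 0) - Lfun 0 :=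
      hψanti (Set.left_mem_Icc.2 hρ) (Set.mem_Icc.2 ⟨hρ, le_refl ρ⟩) hρ
    rw [Lfun_zero] at h0
    simp only [mul_zero, add_zero, Real.log_one, sub_zero] at h0
    exact le_trans h0 (le_max_left _ _)

lemma log_diff_le {a b t : ℝ} (hb : 0 < b) (hab : b ≤ a) (ht : 0 ≤ t) :
    Real.log (1 + a * t) - Real.log (1 + b * t) ≤ Real.log a - Real.log b := by
  have ha : 0 < a := lt_of_lt_of_le hb hab
  have h1 : (0:ℝ) < 1 + b * t := by nlinarith
  have h2 : (0:ℝ) < 1 + a * t := by nlinarith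
  rw [← Real.log_div h2.ne' h1.ne', ← Real.log_div ha.ne' hb.ne']
  apply Real.log_le_log (by positivity)
  rw [div_le_div_iff₀ h1 hb]
  nlinarith

lemma abs_log_diff_le {a b t : ℝ} (ha : 0 < a) (hb : 0 < b) (ht : 0 ≤ t) :
    |Real.log (1 + a * t) - Real.log (1 + b * t)| ≤ |Real.log a - Real.log b| := by
  have h1 : (0:ℝ) < 1 + b * t := by nlinarith
  have h2 : (0:ℝ) < 1 + a * t := by nlinarith
  rcases le_total b a with h | h
  · rw [abs_of_nonneg (by
        have := Real.log_le_log h1 (by nlinarith : 1 + b * t ≤ 1 + a * t); linarith),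
      abs_of_nonneg (by have := Real.log_le_log hb h; linarith)]
    exact log_diff_le hb h ht
  · rw [abs_sub_comm, abs_sub_comm (Real.log a),
      abs_of_nonneg (by
        have := Real.log_le_log h2 (by nlinarith : 1 + a * t ≤ 1 + b * t); linarith),
      abs_of_nonneg (by have := Real.log_le_log ha h; linarith)]
    exact log_diff_le ha h ht

lemma tendsto_log_ratio {a b : ℝ} (ha : 0 < a) (hb : 0 < b) :
    Filter.Tendsto (fun n : ℕ => Real.log (1 + a * n) - Real.log (1 + b * n)) Filter.atTop
      (nhds (Real.log a - Real.log b)) := by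
  have key : ∀ᶠ n : ℕ in Filter.atTop, Real.log (1 + a * n) - Real.log (1 + b * n)
      = Real.log (a + 1/(n:ℝ)) - Real.log (b + 1/(n:ℝ)) := by
    filter_upwards [Filter.eventually_ge_atTop 1] with n hn
    have hn0 : (0:ℝ) < n := by exact_mod_cast Nat.lt_of_lt_of_le Nat.zero_lt_one hn
    have e1 : Real.log (1 + a * n) - Real.log n = Real.log (a + 1/(n:ℝ)) := by
      rw [← Real.log_div (by nlinarith) hn0.ne']
      congr 1
      field_simp
      ring
    have e2 : Real.log (1 + b * n) - Real.log n = Real.log (b + 1/(n:ℝ)) := by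
      rw [← Real.log_div (by nlinarith) hn0.ne']
      congr 1
      field_simp
      ring
    linarith
  refine Filter.Tendsto.congr' (Filter.EventuallyEq.symm key) ?_
  have h2 : Filter.Tendsto (fun n : ℕ => 1/(n:ℝ)) Filter.atTop (nhds 0) :=
    tendsto_one_div_atTop_nhds_zero_nat
  have hA : Filter.Tendsto (fun n : ℕ => Real.log (a + 1/(n:ℝ))) Filter.atTop
      (nhds (Real.log a)) :=
    (Real.continuousAt_log ha.ne').tendsto.comp (by simpa using (tendsto_const_nhds.add h2))
  have hB : Filter.Tendsto (fun n : ℕ => Real.log (b + 1/(n:ℝ))) Filter.atTop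
      (nhds (Real.log b)) :=
    (Real.continuousAt_log hb.ne').tendsto.comp (by simpa using (tendsto_const_nhds.add h2))
  exact hA.sub hB

section MainProof

open MeasureTheory ProbabilityTheory Real Filter Set

/-- Let `H₁,…,H_K, G` be independent `Exp(1)` random variables (`K ≥ 1`) and
`M = max(H₁,…,H_K)`.  Then
`lim_{P̄ → ∞} R⁻_K(P̄) = sup_{T ≥ 0} E[log(M/G) · 1{M ≥ T}]`. -/
theorem stmt16 {Ω : Type*} [MeasurableSpace Ω] (μ : Measure Ω)
    [IsProbabilityMeasure μ] {K : ℕ} (hK : 1 ≤ K)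
    (H : Fin K → Ω → ℝ) (G : Ω → ℝ)
    (hHm : ∀ i, Measurable (H i)) (hGm : Measurable G)
    (hIndep : iIndepFun
      (fun i : Option (Fin K) => Option.elim i G fun k => H k) μ)
    (hHd : ∀ i, Measure.map (H i) μ = expMeasure 1)
    (hGd : Measure.map G μ = expMeasure 1) :
    Filter.Tendsto (fun P : ℝ => Rminus μ (fun ω => ⨆ i : Fin K, H i ω) G P)
      Filter.atTop
      (nhds (sSup {r : ℝ | ∃ T : ℝ, 0 ≤ T ∧
        r = ∫ ω, (if T ≤ ⨆ i : Fin K, H i ω then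
            Real.log ((⨆ i : Fin K, H i ω) / G ω) else 0) ∂μ})) := by
  haveI : NeZero K := ⟨by omega⟩
  haveI hne : Nonempty (Fin K) := ⟨⟨0, by omega⟩⟩
  set M : Ω → ℝ := fun ω => ⨆ i, H i ω with hMdef
  have hMsup : ∀ ω, M ω = Finset.univ.sup' Finset.univ_nonempty (fun i => H i ω) := by
    intro ω
    rw [hMdef]
    exact (Finset.sup'_univ_eq_ciSup _).symm
  have hMm : Measurable M := by
    have h1 := Finset.measurable_sup' (Finset.univ_nonempty (α := Fin K)) (fun i _ => hHm i)
    have h2 : (Finset.univ.sup' Finset.univ_nonempty H) = M := by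
      funext ω
      rw [Finset.sup'_apply, hMsup ω]
    rwa [h2] at h1
  -- independence of M and G
  have hIndepMG : IndepFun M G μ := by
    classical
    set f : Option (Fin K) → Ω → ℝ := fun i => Option.elim i G fun k => H k with hfdef
    have hfm : ∀ i, Measurable (f i) := by
      intro i; cases i with
      | none => exact hGm
      | some k => exact hHm k
    set S : Finset (Option (Fin K)) := Finset.univ.erase none with hS
    have hmem : ∀ i : Fin K, (some i : Option (Fin K)) ∈ S :=
      fun i => Finset.mem_erase.2 ⟨Option.some_ne_none i, Finset.mem_univ _⟩
    have hdisj : Disjoint S ({none} : Finset (Option (Fin K))) :=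
      Finset.disjoint_singleton_right.2 (Finset.notMem_erase _ _)
    have hbase := hIndep.indepFun_finset S {none} hdisj hfm
    set φ : (S → ℝ) → ℝ :=
      fun v => Finset.univ.sup' Finset.univ_nonempty (fun i : Fin K => v ⟨some i, hmem i⟩) with hφ
    set ψ : (({none} : Finset (Option (Fin K))) → ℝ) → ℝ :=
      fun v => v ⟨none, Finset.mem_singleton_self none⟩ with hψ
    have hφm : Measurable φ := by
      have h1 := Finset.measurable_sup' (Finset.univ_nonempty (α := Fin K))
        (f := fun i : Fin K => fun v : (S → ℝ) => v ⟨some i, hmem i⟩)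
        (fun i _ => measurable_pi_apply _)
      have h2 : (Finset.univ.sup' Finset.univ_nonempty
          (fun i : Fin K => fun v : (S → ℝ) => v ⟨some i, hmem i⟩)) = φ := by
        funext v
        rw [Finset.sup'_apply, hφ]
      rwa [h2] at h1
    have hψm : Measurable ψ := measurable_pi_apply _
    have hcomp := hbase.comp hφm hψm
    have heq1 : (φ ∘ fun a (i : S) => f i a) = M := by
      funext a
      show Finset.univ.sup' Finset.univ_nonempty (fun i : Fin K => f (some i) a) = M a
      rw [hMsup a]
      rfl
    have heq2 : (ψ ∘ fun a (i : ({none} : Finset (Option (Fin K)))) => f i a) = G := by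
      funext a; rfl
    rwa [heq1, heq2] at hcomp
  -- positivity and integrability
  have hGpos : ∀ᵐ ω ∂μ, 0 < G ω := by
    have := (ae_map_iff hGm.aemeasurable (measurableSet_Ioi (a := (0:ℝ)))).1
      (by rw [hGd]; exact nu_ae_pos)
    filter_upwards [this] with ω hω using hω
  have hHpos : ∀ i, ∀ᵐ ω ∂μ, 0 < H i ω := by
    intro i
    have := (ae_map_iff (hHm i).aemeasurable (measurableSet_Ioi (a := (0:ℝ)))).1
      (by rw [hHd i]; exact nu_ae_pos)
    filter_upwards [this] with ω hω using hω
  have hMge : ∀ ω (i : Fin K), H i ω ≤ M ω := by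
    intro ω i
    rw [hMdef]
    exact le_ciSup (f := fun i => H i ω)
      (Set.Finite.bddAbove (Set.finite_range fun i => H i ω)) i
  have i0 : Fin K := Classical.arbitrary _
  have hMpos : ∀ᵐ ω ∂μ, 0 < M ω := by
    filter_upwards [hHpos i0] with ω hω
    exact lt_of_lt_of_le hω (hMge ω i0)
  have hintG_log : Integrable (fun ω => |Real.log (G ω)|) μ := by
    have h1 : Integrable (fun x : ℝ => |Real.log x|) (Measure.map G μ) := by
      rw [hGd]; exact integrable_abs_log_nu
    exact (integrable_map_measure (measurable_log.abs.aestronglyMeasurable)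
      hGm.aemeasurable).1 h1
  have hintHi : ∀ i, Integrable (H i) μ := by
    intro i
    have h1 : Integrable (fun x : ℝ => x) (Measure.map (H i) μ) := by
      rw [hHd i]; exact integrable_id_nu
    exact (integrable_map_measure measurable_id.aestronglyMeasurable
      (hHm i).aemeasurable).1 h1
  have hintM : Integrable M μ := by
    refine (integrable_finset_sum Finset.univ (fun i _ => hintHi i)).mono'
      hMm.aestronglyMeasurable ?_
    have hallpos : ∀ᵐ ω ∂μ, ∀ i : Fin K, 0 < H i ω := ae_all_iff.2 hHpos
    filter_upwards [hallpos, hMpos] with ω hω hMω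
    rw [Real.norm_eq_abs, abs_of_nonneg hMω.le]
    rw [hMdef]
    exact ciSup_le fun i => Finset.single_le_sum (f := fun j => H j ω)
      (fun j _ => (hω j).le) (Finset.mem_univ i)
  have hintM_log : Integrable (fun ω => |Real.log (M ω)|) μ := by
    have h1 : Integrable (fun ω => |Real.log (H i0 ω)|) μ := by
      have h2 : Integrable (fun x : ℝ => |Real.log x|) (Measure.map (H i0) μ) := by
        rw [hHd i0]; exact integrable_abs_log_nu
      exact (integrable_map_measure (measurable_log.abs.aestronglyMeasurable)
        (hHm i0).aemeasurable).1 h2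
    refine (hintM.add h1).mono' ((measurable_log.comp hMm).abs.aestronglyMeasurable) ?_
    filter_upwards [hHpos i0, hMpos] with ω hH0 hM0
    rw [Real.norm_eq_abs, abs_abs, Pi.add_apply]
    rcases le_or_gt 1 (M ω) with h | h
    · rw [abs_of_nonneg (Real.log_nonneg h)]
      have h2 := Real.log_le_sub_one_of_pos hM0
      have h3 : (0:ℝ) ≤ |Real.log (H i0 ω)| := abs_nonneg _
      linarith
    · rw [abs_of_nonpos (Real.log_nonpos hM0.le h.le)]
      have h2 : Real.log (H i0 ω) ≤ Real.log (M ω) := Real.log_le_log hH0 (hMge ω i0)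
      have h3 : -Real.log (M ω) ≤ -Real.log (H i0 ω) := by linarith
      have h4 : -Real.log (H i0 ω) ≤ |Real.log (H i0 ω)| := neg_le_abs _
      linarith
  -- the law of the pair
  haveI hPM : IsProbabilityMeasure (Measure.map M μ) :=
    Measure.isProbabilityMeasure_map hMm.aemeasurable
  have hmap_pair : Measure.map (fun ω => (M ω, G ω)) μ
      = (Measure.map M μ).prod (expMeasure 1) := by
    rw [← hGd]
    exact (indepFun_iff_map_prod_eq_prod_map_map hMm.aemeasurable hGm.aemeasurable).1 hIndepMG
  have hνMpos : ∀ᵐ m ∂(Measure.map M μ), 0 < m := by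
    rw [ae_map_iff hMm.aemeasurable (measurableSet_Ioi (a := (0:ℝ)))]
    filter_upwards [hMpos] with ω hω using hω
  have hνM_log : Integrable (fun m : ℝ => |Real.log m|) (Measure.map M μ) := by
    exact (integrable_map_measure (measurable_log.abs.aestronglyMeasurable)
      hMm.aemeasurable).2 hintM_log
  -- representation of the threshold integrals
  have habs_bound : ∀ m g : ℝ, |Real.log (m/g)| ≤ |Real.log m| + |Real.log g| := by
    intro m g
    by_cases hm : m = 0
    · simp [hm, Real.log_zero]
    by_cases hg : g = 0
    · simp [hg, Real.log_zero]
    rw [Real.log_div hm hg]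
    exact abs_sub _ _
  have hprod_bound_int : Integrable (fun p : ℝ × ℝ => |Real.log p.1| + |Real.log p.2|)
      ((Measure.map M μ).prod (expMeasure 1)) := by
    have h1 := Integrable.mul_prod (μ := Measure.map M μ) (ν := expMeasure 1)
      hνM_log (integrable_const (1:ℝ))
    have h2 := Integrable.mul_prod (μ := Measure.map M μ) (ν := expMeasure 1)
      (integrable_const (1:ℝ)) integrable_abs_log_nu
    have := h1.add h2
    simp at this; exact this
  have hΦm : ∀ T : ℝ, Measurable (fun p : ℝ × ℝ => if T ≤ p.1 then Real.log (p.1 / p.2) else 0) := by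
    intro T
    exact Measurable.ite (measurableSet_le measurable_const measurable_fst)
      (measurable_log.comp (measurable_fst.div measurable_snd)) measurable_const
  have hΦint : ∀ T : ℝ, Integrable (fun p : ℝ × ℝ => if T ≤ p.1 then Real.log (p.1 / p.2) else 0)
      ((Measure.map M μ).prod (expMeasure 1)) := by
    intro T
    refine hprod_bound_int.mono' (hΦm T).aestronglyMeasurable
      (Filter.Eventually.of_forall fun p => ?_)
    rw [Real.norm_eq_abs]
    split_ifs with h
    · exact habs_bound p.1 p.2
    · simp
      positivity
  have hpair_aem : AEMeasurable (fun ω => (M ω, G ω)) μ := (hMm.prodMk hGm).aemeasurable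
  have hgT : ∀ T : ℝ, (∫ ω, (if T ≤ M ω then Real.log (M ω / G ω) else 0) ∂μ)
      = ∫ m, (if T ≤ m then Real.log m - cE else 0) ∂(Measure.map M μ) := by
    intro T
    have h1 : (∫ p, (if T ≤ p.1 then Real.log (p.1 / p.2) else 0)
          ∂((Measure.map M μ).prod (expMeasure 1)))
        = ∫ ω, (if T ≤ M ω then Real.log (M ω / G ω) else 0) ∂μ := by
      rw [← hmap_pair, integral_map hpair_aem (hΦm T).aestronglyMeasurable]
    have h2 := integral_prod _ (hΦint T)
    have h3 : ∫ m, (∫ g, (if T ≤ m then Real.log (m / g) else 0) ∂(expMeasure 1))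
          ∂(Measure.map M μ)
        = ∫ m, (if T ≤ m then Real.log m - cE else 0) ∂(Measure.map M μ) := by
      refine integral_congr_ae ?_
      filter_upwards [hνMpos] with m hm
      by_cases hTm : T ≤ m
      · simp only [if_pos hTm]
        have h4 : ∫ g, Real.log (m / g) ∂(expMeasure 1) = Real.log m - cE := by
          have h5 : (fun g => Real.log (m / g)) =ᵐ[expMeasure 1]
              (fun g => Real.log m - Real.log g) := by
            filter_upwards [nu_ae_pos] with g hg
            exact Real.log_div hm.ne' hg.ne'
          rw [integral_congr_ae h5, integral_sub (integrable_const _) integrable_log_nu,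
            integral_const]
          simp [cE]
        exact h4
      · simp only [if_neg hTm]
        simp
    rw [← h1, h2, ← h3]
  -- the optimal threshold
  set T₀ : ℝ := Real.exp cE with hT₀def
  have hT₀pos : 0 < T₀ := Real.exp_pos _
  have hmax_eq : ∀ᵐ m ∂(Measure.map M μ),
      max 0 (Real.log m - cE) = if T₀ ≤ m then Real.log m - cE else 0 := by
    filter_upwards [hνMpos] with m hm
    by_cases h : T₀ ≤ m
    · rw [if_pos h, max_eq_right]
      have : cE ≤ Real.log m := by
        calc cE = Real.log T₀ := (Real.log_exp cE).symm
        _ ≤ Real.log m := Real.log_le_log hT₀pos h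
      linarith
    · rw [if_neg h, max_eq_left]
      have : Real.log m ≤ cE := by
        calc Real.log m ≤ Real.log T₀ := Real.log_le_log hm (le_of_not_ge h)
        _ = cE := Real.log_exp cE
      linarith
  have hIntMax : Integrable (fun m => max 0 (Real.log m - cE)) (Measure.map M μ) := by
    refine (hνM_log.add (integrable_const |cE|)).mono'
      ((measurable_const.max (measurable_log.sub measurable_const)).aestronglyMeasurable)
      (Filter.Eventually.of_forall fun m => ?_)
    rw [Real.norm_eq_abs, abs_of_nonneg (le_max_left _ _)]
    have h1 : Real.log m - cE ≤ |Real.log m| + |cE| := by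
      have := le_abs_self (Real.log m)
      have := neg_abs_le cE
      linarith
    have h2 : (0:ℝ) ≤ |Real.log m| + |cE| := by positivity
    exact max_le h2 h1
  have hgT0_nonneg : 0 ≤ ∫ ω, (if T₀ ≤ M ω then Real.log (M ω / G ω) else 0) ∂μ := by
    rw [hgT T₀]
    refine integral_nonneg fun m => ?_
    simp only [Pi.zero_apply]
    by_cases h : T₀ ≤ m
    · rw [if_pos h]
      have : cE ≤ Real.log m := by
        calc cE = Real.log T₀ := (Real.log_exp cE).symm
        _ ≤ Real.log m := Real.log_le_log hT₀pos h
      linarith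
    · rw [if_neg h]
  -- upper bound for arbitrary power allocations
  have hupper : ∀ p : ℝ → ℝ, Measurable p → (∀ x, 0 ≤ p x) →
      (∫ ω, (Real.log (1 + M ω * p (M ω)) - Real.log (1 + G ω * p (M ω))) ∂μ)
        ≤ ∫ ω, (if T₀ ≤ M ω then Real.log (M ω / G ω) else 0) ∂μ := by
    intro p hp hp0
    have hφmeas : Measurable (fun q : ℝ × ℝ =>
        Real.log (1 + q.1 * p q.1) - Real.log (1 + q.2 * p q.1)) :=
      ((measurable_log.comp (measurable_const.add
          (measurable_fst.mul (hp.comp measurable_fst)))).sub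
        (measurable_log.comp (measurable_const.add
          (measurable_snd.mul (hp.comp measurable_fst)))))
    by_cases hFi : Integrable
        (fun ω => Real.log (1 + M ω * p (M ω)) - Real.log (1 + G ω * p (M ω))) μ
    · have hφint : Integrable (fun q : ℝ × ℝ =>
          Real.log (1 + q.1 * p q.1) - Real.log (1 + q.2 * p q.1))
          ((Measure.map M μ).prod (expMeasure 1)) := by
        rw [← hmap_pair]
        exact (integrable_map_measure hφmeas.aestronglyMeasurable hpair_aem).2 hFi
      have heqμ : ∫ ω, (Real.log (1 + M ω * p (M ω)) - Real.log (1 + G ω * p (M ω))) ∂μ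
          = ∫ q, (Real.log (1 + q.1 * p q.1) - Real.log (1 + q.2 * p q.1))
              ∂((Measure.map M μ).prod (expMeasure 1)) := by
        rw [← hmap_pair, integral_map hpair_aem hφmeas.aestronglyMeasurable]
      have hprod := integral_prod _ hφint
      have hmarg : ∀ m : ℝ, (∫ g, (Real.log (1 + m * p m) - Real.log (1 + g * p m))
          ∂(expMeasure 1)) = Real.log (1 + m * p m) - Lfun (p m) := by
        intro m
        rw [integral_sub (integrable_const _) (integrable_log_one_add (hp0 m)), integral_const]
        simp [Lfun]
      have hinner_int : Integrable
          (fun m => ∫ g, (Real.log (1 + m * p m) - Real.log (1 + g * p m)) ∂(expMeasure 1))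
          (Measure.map M μ) := hφint.integral_prod_left
      have hbnd : (fun m => ∫ g, (Real.log (1 + m * p m) - Real.log (1 + g * p m))
            ∂(expMeasure 1)) ≤ᵐ[Measure.map M μ] fun m => max 0 (Real.log m - cE) := by
        filter_upwards [hνMpos] with m hm
        rw [hmarg m]
        exact psi_le hm (hp0 m)
      calc ∫ ω, (Real.log (1 + M ω * p (M ω)) - Real.log (1 + G ω * p (M ω))) ∂μ
          = ∫ q, (Real.log (1 + q.1 * p q.1) - Real.log (1 + q.2 * p q.1))
              ∂((Measure.map M μ).prod (expMeasure 1)) := heqμ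
        _ = ∫ m, (∫ g, (Real.log (1 + m * p m) - Real.log (1 + g * p m)) ∂(expMeasure 1))
              ∂(Measure.map M μ) := hprod
        _ ≤ ∫ m, max 0 (Real.log m - cE) ∂(Measure.map M μ) :=
              integral_mono_ae hinner_int hIntMax hbnd
        _ = ∫ m, (if T₀ ≤ m then Real.log m - cE else 0) ∂(Measure.map M μ) :=
              integral_congr_ae hmax_eq
        _ = ∫ ω, (if T₀ ≤ M ω then Real.log (M ω / G ω) else 0) ∂μ := (hgT T₀).symm
    · rw [integral_undef hFi]
      exact hgT0_nonneg
  -- the RHS set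
  set RHSset : Set ℝ := {r : ℝ | ∃ T : ℝ, 0 ≤ T ∧
      r = ∫ ω, (if T ≤ M ω then Real.log (M ω / G ω) else 0) ∂μ} with hRHSdef
  have hint_ind : ∀ T : ℝ,
      Integrable (fun ω => if T ≤ M ω then Real.log (M ω / G ω) else 0) μ := by
    intro T
    refine (hintM_log.add hintG_log).mono' ?_ (Filter.Eventually.of_forall fun ω => ?_)
    · exact (Measurable.ite (measurableSet_le measurable_const hMm)
        ((hMm.div hGm).log) measurable_const).aestronglyMeasurable
    · rw [Real.norm_eq_abs]
      split_ifs with h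
      · exact habs_bound _ _
      · simp
        positivity
  have hCbound : ∀ T : ℝ, (∫ ω, (if T ≤ M ω then Real.log (M ω / G ω) else 0) ∂μ)
      ≤ ∫ ω, (|Real.log (M ω)| + |Real.log (G ω)|) ∂μ := by
    intro T
    refine integral_mono (hint_ind T) (hintM_log.add hintG_log) fun ω => ?_
    split_ifs with h
    · exact (le_abs_self _).trans (habs_bound _ _)
    · positivity
  have hRHS_ne : RHSset.Nonempty := ⟨_, 0, le_refl 0, rfl⟩
  have hRHS_bdd : BddAbove RHSset := by
    refine ⟨∫ ω, (|Real.log (M ω)| + |Real.log (G ω)|) ∂μ, fun r hr => ?_⟩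
    obtain ⟨T, hT, hr⟩ := hr
    exact hr ▸ hCbound T
  have hgT₀_le_S : (∫ ω, (if T₀ ≤ M ω then Real.log (M ω / G ω) else 0) ∂μ) ≤ sSup RHSset :=
    le_csSup hRHS_bdd ⟨T₀, hT₀pos.le, rfl⟩
  -- dominated convergence for the threshold powers
  have hlower : ∀ T : ℝ, Filter.Tendsto (fun n : ℕ =>
        ∫ ω, (Real.log (1 + M ω * (if T ≤ M ω then (n:ℝ) else 0))
          - Real.log (1 + G ω * (if T ≤ M ω then (n:ℝ) else 0))) ∂μ) Filter.atTop
      (nhds (∫ ω, (if T ≤ M ω then Real.log (M ω / G ω) else 0) ∂μ)) := by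
    intro T
    refine tendsto_integral_filter_of_dominated_convergence
      (bound := fun ω => |Real.log (M ω)| + |Real.log (G ω)|) ?_ ?_
      (hintM_log.add hintG_log) ?_
    · refine Filter.Eventually.of_forall fun n => ?_
      have hq : Measurable (fun ω => if T ≤ M ω then (n:ℝ) else 0) :=
        Measurable.ite (measurableSet_le measurable_const hMm) measurable_const measurable_const
      exact ((measurable_log.comp (measurable_const.add (hMm.mul hq))).sub
        (measurable_log.comp (measurable_const.add (hGm.mul hq)))).aestronglyMeasurable
    · refine Filter.Eventually.of_forall fun n => ?_
      filter_upwards [hMpos, hGpos] with ω hM hG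
      rw [Real.norm_eq_abs]
      by_cases h : T ≤ M ω
      · simp only [if_pos h]
        calc |Real.log (1 + M ω * (n:ℝ)) - Real.log (1 + G ω * (n:ℝ))|
            ≤ |Real.log (M ω) - Real.log (G ω)| :=
              abs_log_diff_le hM hG (Nat.cast_nonneg n)
          _ ≤ |Real.log (M ω)| + |Real.log (G ω)| := abs_sub _ _
      · simp only [if_neg h, mul_zero, add_zero, Real.log_one, sub_zero, abs_zero]
        positivity
    · filter_upwards [hMpos, hGpos] with ω hM hG
      by_cases h : T ≤ M ω
      · simp only [if_pos h]
        rw [Real.log_div hM.ne' hG.ne']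
        exact tendsto_log_ratio hM hG
      · simp only [if_neg h, mul_zero, add_zero, Real.log_one, sub_zero]
        exact tendsto_const_nhds
  -- the sets defining Rminus
  set PSet : ℝ → Set ℝ := fun P => {r : ℝ | ∃ p : ℝ → ℝ, Measurable p ∧ (∀ x, 0 ≤ p x) ∧
      (∫ ω, p (M ω) ∂μ) ≤ P ∧
      r = ∫ ω, (Real.log (1 + M ω * p (M ω)) - Real.log (1 + G ω * p (M ω))) ∂μ} with hPSet
  have hRm : ∀ P : ℝ, Rminus μ M G P = sSup (PSet P) := fun P => rfl
  have hub : ∀ P : ℝ, ∀ r ∈ PSet P,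
      r ≤ ∫ ω, (if T₀ ≤ M ω then Real.log (M ω / G ω) else 0) ∂μ := by
    intro P r hr
    obtain ⟨p, hpm, hp0, _, hr⟩ := hr
    exact hr ▸ hupper p hpm hp0
  have hPbdd : ∀ P : ℝ, BddAbove (PSet P) :=
    fun P => ⟨_, hub P⟩
  have hPne : ∀ P : ℝ, 0 ≤ P → (PSet P).Nonempty := by
    intro P hP
    refine ⟨_, (fun _ => 0), measurable_const, fun _ => le_refl 0, ?_, rfl⟩
    simpa using hP
  -- final limit statement
  have main : Filter.Tendsto (fun P : ℝ => Rminus μ M G P) Filter.atTop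
      (nhds (sSup RHSset)) := by
    rw [Metric.tendsto_atTop]
    intro ε hε
    obtain ⟨r, hrmem, hrgt⟩ := exists_lt_of_lt_csSup hRHS_ne
      (show sSup RHSset - ε/2 < sSup RHSset by linarith)
    obtain ⟨T, hT, hrT⟩ := hrmem
    have hconv := hlower T
    rw [Metric.tendsto_atTop] at hconv
    obtain ⟨N, hN⟩ := hconv (ε/2) (by linarith)
    refine ⟨max (N:ℝ) 0, fun P hP => ?_⟩
    have hP0 : (0:ℝ) ≤ P := le_trans (le_max_right _ _) hP
    have hPN : (N:ℝ) ≤ P := le_trans (le_max_left _ _) hP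
    have h1 : Rminus μ M G P ≤ sSup RHSset := by
      rw [hRm]
      exact csSup_le (hPne P hP0) fun r' hr' => le_trans (hub P r' hr') hgT₀_le_S
    -- the approximant with n = N is admissible
    have hVmem : (∫ ω, (Real.log (1 + M ω * (if T ≤ M ω then (N:ℝ) else 0))
        - Real.log (1 + G ω * (if T ≤ M ω then (N:ℝ) else 0))) ∂μ) ∈ PSet P := by
      refine ⟨fun x => if T ≤ x then (N:ℝ) else 0,
        Measurable.ite (measurableSet_le measurable_const measurable_id)
          measurable_const measurable_const,
        fun x => by positivity, ?_, rfl⟩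
      have hqi : Integrable (fun ω => if T ≤ M ω then (N:ℝ) else 0) μ := by
        refine (integrable_const (N:ℝ)).mono'
          ((Measurable.ite (measurableSet_le measurable_const hMm) measurable_const
            measurable_const).aestronglyMeasurable)
          (Filter.Eventually.of_forall fun ω => ?_)
        rw [Real.norm_eq_abs]
        split_ifs
        · rw [abs_of_nonneg (Nat.cast_nonneg N)]
        · simp
      calc (∫ ω, (if T ≤ M ω then (N:ℝ) else 0) ∂μ)
          ≤ ∫ _, (N:ℝ) ∂μ := by
            refine integral_mono hqi (integrable_const _) fun ω => ?_
            split_ifs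
            · exact le_refl _
            · positivity
        _ = (N:ℝ) := by simp
        _ ≤ P := hPN
    have h2 : (∫ ω, (Real.log (1 + M ω * (if T ≤ M ω then (N:ℝ) else 0))
        - Real.log (1 + G ω * (if T ≤ M ω then (N:ℝ) else 0))) ∂μ) ≤ Rminus μ M G P := by
      rw [hRm]
      exact le_csSup (hPbdd P) hVmem
    have h3 := hN N (le_refl N)
    rw [Real.dist_eq, abs_lt] at h3
    rw [Real.dist_eq, abs_lt]
    rw [← hrT] at h3
    constructor
    · linarith [h3.1, h3.2]
    · linarith [h1]
  exact main

end MainProof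
end SecAux
end

section
/- Let X and G be independent Exp(1) random variables and let γ denote the Euler–Mascheroni constant. Then lim_{P → ∞} E[max(0, log(1 + X·P) − E[log(1 + G·P)])] = E[max(0, log X + γ)], and this limit is strictly positive. -/
open MeasureTheory ProbabilityTheory Filter Real Set
open scoped ENNReal NNReal Topology

namespace Stmt18Aux


noncomputable def w (x : ℝ) : ℝ := if 0 ≤ x then Real.exp (-x) else 0

lemma w_nonneg (x : ℝ) : 0 ≤ w x := by unfold w; split <;> positivity

lemma w_measurable : Measurable w :=
  Measurable.ite measurableSet_Ici (Real.measurable_exp.comp measurable_neg) measurable_const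

lemma gammaPDFReal_eq_w (x : ℝ) : gammaPDFReal 1 1 x = w x := by
  unfold gammaPDFReal w
  split <;> simp [Real.Gamma_one]

lemma expMeasure_eq :
    expMeasure 1 = volume.withDensity (fun x => ((w x).toNNReal : ℝ≥0∞)) := by
  unfold expMeasure gammaMeasure
  congr 1
  funext x
  rw [gammaPDF, gammaPDFReal_eq_w]
  rfl

lemma smul_eq_indicator (g : ℝ → ℝ) :
    (fun x => (w x).toNNReal • g x) = Set.indicator (Ici 0) (fun x => Real.exp (-x) * g x) := by
  funext x
  simp only [NNReal.smul_def, smul_eq_mul, Real.coe_toNNReal _ (w_nonneg x)]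
  unfold w
  by_cases hx : (0:ℝ) ≤ x
  · rw [if_pos hx, Set.indicator_of_mem (by exact hx : x ∈ Ici (0:ℝ))]
  · rw [if_neg hx, Set.indicator_of_notMem (by simpa using hx), zero_mul]

lemma integral_expMeasure (g : ℝ → ℝ) :
    ∫ x, g x ∂(expMeasure 1) = ∫ x in Ioi (0:ℝ), Real.exp (-x) * g x := by
  rw [expMeasure_eq, integral_withDensity_eq_integral_smul w_measurable.real_toNNReal g,
    smul_eq_indicator, integral_indicator measurableSet_Ici, integral_Ici_eq_integral_Ioi]

lemma integrable_expMeasure_iff {g : ℝ → ℝ} :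
    Integrable g (expMeasure 1) ↔ IntegrableOn (fun x => Real.exp (-x) * g x) (Ioi (0:ℝ)) := by
  rw [expMeasure_eq, integrable_withDensity_iff_integrable_smul w_measurable.real_toNNReal,
    show (fun x => (w x).toNNReal • g x) = Set.indicator (Ici 0) (fun x => Real.exp (-x) * g x)
      from smul_eq_indicator g,
    integrable_indicator_iff measurableSet_Ici, integrableOn_Ici_iff_integrableOn_Ioi]


lemma integrableOn_log_exp :
    IntegrableOn (fun x => Real.log x * Real.exp (-x)) (Ioi (0:ℝ)) := by
  have hmeas : AEStronglyMeasurable (fun x => Real.log x * Real.exp (-x)) :=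
    (Real.measurable_log.mul (Real.measurable_exp.comp measurable_neg)).aestronglyMeasurable
  have h1 : IntegrableOn (fun x => Real.log x * Real.exp (-x)) (Ioc (0:ℝ) 1) := by
    have hb : IntegrableOn (fun x : ℝ => 2 * x ^ (-(1/2) : ℝ)) (Ioc (0:ℝ) 1) := by
      have h := intervalIntegral.intervalIntegrable_rpow' (r := -(1/2)) (by norm_num)
        (a := (0:ℝ)) (b := 1)
      rw [intervalIntegrable_iff_integrableOn_Ioc_of_le zero_le_one] at h
      exact h.const_mul 2
    refine hb.mono' hmeas.restrict ?_
    rw [ae_restrict_iff' measurableSet_Ioc]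
    refine ae_of_all _ fun x hx => ?_
    obtain ⟨hx0, hx1⟩ := hx
    have hrp : (0:ℝ) < x ^ (-(1/2) : ℝ) := Real.rpow_pos_of_pos hx0 _
    have h2 : Real.log (x ^ (-(1/2) : ℝ)) = (-(1/2)) * Real.log x := Real.log_rpow hx0 _
    have h3 : Real.log (x ^ (-(1/2):ℝ)) ≤ x ^ (-(1/2):ℝ) :=
      (Real.log_le_sub_one_of_pos hrp).trans (by linarith)
    have hlog : Real.log x ≤ 0 := Real.log_nonpos hx0.le hx1
    have hexp : Real.exp (-x) ≤ 1 := Real.exp_le_one_iff.mpr (by linarith)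
    have hkey : -Real.log x ≤ 2 * x ^ (-(1/2) : ℝ) := by nlinarith
    rw [norm_mul, Real.norm_eq_abs, Real.norm_eq_abs, abs_of_nonpos hlog,
      abs_of_pos (Real.exp_pos _)]
    calc -Real.log x * Real.exp (-x) ≤ -Real.log x * 1 := by
          apply mul_le_mul_of_nonneg_left hexp (by linarith)
      _ ≤ 2 * x ^ (-(1/2) : ℝ) := by linarith
  have h2 : IntegrableOn (fun x => Real.log x * Real.exp (-x)) (Ioi (1:ℝ)) := by
    have hb : IntegrableOn (fun x : ℝ => Real.exp (-x) * x ^ ((2:ℝ) - 1)) (Ioi (1:ℝ)) :=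
      (Real.GammaIntegral_convergent (by norm_num : (0:ℝ) < 2)).mono_set
        (Ioi_subset_Ioi zero_le_one)
    refine hb.mono' hmeas.restrict ?_
    rw [ae_restrict_iff' measurableSet_Ioi]
    refine ae_of_all _ fun x hx => ?_
    have hx1 : (1:ℝ) < x := hx
    have hlog : 0 ≤ Real.log x := Real.log_nonneg hx1.le
    have hlx : Real.log x ≤ x := (Real.log_le_sub_one_of_pos (by linarith)).trans (by linarith)
    rw [norm_mul, Real.norm_eq_abs, Real.norm_eq_abs, abs_of_nonneg hlog,
      abs_of_pos (Real.exp_pos _)]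
    have : x ^ ((2:ℝ) - 1) = x := by norm_num
    rw [this, mul_comm (Real.exp (-x)) x]
    exact mul_le_mul_of_nonneg_right hlx (Real.exp_pos _).le
  have := h1.union h2
  rwa [Ioc_union_Ioi_eq_Ioi zero_le_one] at this

lemma integrable_log_expMeasure : Integrable Real.log (expMeasure 1) := by
  rw [integrable_expMeasure_iff]
  exact integrableOn_log_exp.congr_fun (fun x _ => mul_comm _ _) measurableSet_Ioi

lemma integrable_id_expMeasure : Integrable (fun x : ℝ => x) (expMeasure 1) := by
  rw [integrable_expMeasure_iff]
  have hb := Real.GammaIntegral_convergent (by norm_num : (0:ℝ) < 2)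
  refine hb.congr_fun (fun x _ => ?_) measurableSet_Ioi
  norm_num

lemma integral_log_mul_exp :
    ∫ x in Ioi (0:ℝ), Real.log x * Real.exp (-x) = -Real.eulerMascheroniConstant := by
  have h1 := Complex.hasDerivAt_GammaIntegral (s := 1) (by norm_num)
  have hev : Complex.GammaIntegral =ᶠ[nhds (1:ℂ)] Complex.Gamma := by
    have hmem : {s : ℂ | 0 < s.re} ∈ nhds (1 : ℂ) :=
      (isOpen_lt continuous_const Complex.continuous_re).mem_nhds (by simp)
    filter_upwards [hmem] with s hs
    exact (Complex.Gamma_eq_integral hs).symm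
  have h2 : HasDerivAt Complex.GammaIntegral (-(Real.eulerMascheroniConstant : ℂ)) 1 :=
    Complex.hasDerivAt_Gamma_one.congr_of_eventuallyEq hev
  have h3 := h1.unique h2
  have h4 : (∫ t : ℝ in Ioi (0:ℝ), (t:ℂ) ^ ((1:ℂ) - 1) * ((Real.log t : ℂ) * (Real.exp (-t) : ℂ)))
      = ∫ t in Ioi (0:ℝ), ((Real.log t * Real.exp (-t) : ℝ) : ℂ) := by
    refine integral_congr_ae (ae_of_all _ fun t => ?_)
    simp
  rw [h4] at h3
  have h5 : (∫ t : ℝ in Ioi (0:ℝ), ((Real.log t * Real.exp (-t) : ℝ) : ℂ))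
      = ((∫ t in Ioi (0:ℝ), Real.log t * Real.exp (-t) : ℝ) : ℂ) := integral_ofReal
  rw [h5] at h3
  exact_mod_cast h3



lemma integral_log_expMeasure' (h : IntegrableOn (fun x => Real.log x * Real.exp (-x)) (Ioi (0:ℝ)))
    (hv : ∫ x in Ioi (0:ℝ), Real.log x * Real.exp (-x) = -Real.eulerMascheroniConstant)
    (hint : ∫ x, Real.log x ∂(expMeasure 1) = ∫ x in Ioi (0:ℝ), Real.exp (-x) * Real.log x) :
    ∫ x, Real.log x ∂(expMeasure 1) = -Real.eulerMascheroniConstant := by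
  rw [hint, ← hv]
  exact integral_congr_ae (ae_of_all _ fun x => mul_comm _ _)

lemma ae_pos_expMeasure : ∀ᵐ x ∂(expMeasure 1), 0 < x := by
  have hd : expMeasure 1 = volume.withDensity (exponentialPDF 1) := rfl
  have h1 : expMeasure 1 (Iio (0:ℝ)) = 0 := by
    rw [hd, withDensity_apply _ measurableSet_Iio]
    exact lintegral_exponentialPDF_of_nonpos le_rfl
  have h2 : expMeasure 1 ({(0:ℝ)} : Set ℝ) = 0 := by
    rw [hd]
    exact withDensity_absolutelyContinuous _ _ (measure_singleton 0)
  have h3 : expMeasure 1 (Iic (0:ℝ)) = 0 := by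
    have he : Iic (0:ℝ) = Iio 0 ∪ {0} := by
      ext y; simp [le_iff_lt_or_eq]
    rw [he]
    exact measure_union_null h1 h2
  rw [ae_iff]
  have : {x : ℝ | ¬ 0 < x} = Iic 0 := by ext y; simp
  rw [this]
  exact h3

lemma measure_Ioi_one_pos : 0 < expMeasure 1 (Ioi (1:ℝ)) := by
  haveI : IsProbabilityMeasure (expMeasure (1:ℝ)) := isProbabilityMeasure_expMeasure one_pos
  rcases eq_or_lt_of_le (zero_le : 0 ≤ expMeasure 1 (Ioi (1:ℝ))) with h | h
  swap
  · exact h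
  exfalso
  have hc : expMeasure 1 (Iic (1:ℝ)) = 1 := by
    have := prob_compl_eq_zero_iff (μ := expMeasure 1) (s := Iic (1:ℝ)) measurableSet_Iic
    rw [compl_Iic] at this
    exact this.mp h.symm
  have hcdf : cdf (expMeasure 1) 1 = 1 - Real.exp (-(1*1)) := by
    rw [cdf_expMeasure_eq one_pos]
    simp
  have hcdf2 : cdf (expMeasure 1) 1 = 1 := by
    rw [cdf_eq_real, measureReal_def, hc]
    simp
  rw [hcdf2] at hcdf
  have := Real.exp_pos (-(1*1))
  linarith

lemma log_abs_bound {x ε : ℝ} (hx : 0 < x) (hε : 0 < ε) (hε1 : ε ≤ 1) :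
    |Real.log (ε + x)| ≤ |Real.log x| + x := by
  rcases le_or_gt 1 (ε + x) with h | h
  · rw [abs_of_nonneg (Real.log_nonneg h)]
    have h1 : Real.log (ε + x) ≤ Real.log (1 + x) :=
      Real.log_le_log (by positivity) (by linarith)
    have h2 : Real.log (1 + x) ≤ (1 + x) - 1 := Real.log_le_sub_one_of_pos (by positivity)
    have := abs_nonneg (Real.log x)
    linarith
  · rw [abs_of_nonpos (Real.log_nonpos (by positivity) h.le)]
    have hx1 : x < 1 := by linarith
    have h1 : Real.log x ≤ Real.log (ε + x) := Real.log_le_log hx (by linarith)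
    have h2 : |Real.log x| = -Real.log x := abs_of_nonpos (Real.log_nonpos hx.le hx1.le)
    linarith

end Stmt18Aux

open Stmt18Aux in
/-- Let `X` and `G` be independent `Exp(1)` random variables and let `γ` be
the Euler–Mascheroni constant.  Then
`lim_{P → ∞} E[max(0, log(1 + X·P) − E[log(1 + G·P)])] = E[max(0, log X + γ)]`,
and this limit is strictly positive. -/
theorem stmt18 {Ω : Type*} [MeasurableSpace Ω] (μ : Measure Ω)
    [IsProbabilityMeasure μ]
    (X G : Ω → ℝ) (hXm : Measurable X) (hGm : Measurable G)
    (hIndep : IndepFun X G μ)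
    (hXd : Measure.map X μ = expMeasure 1)
    (hGd : Measure.map G μ = expMeasure 1) :
    Tendsto (fun P : ℝ => ∫ ω,
        max 0 (Real.log (1 + X ω * P) - ∫ ω', Real.log (1 + G ω' * P) ∂μ) ∂μ)
      atTop
      (nhds (∫ ω, max 0 (Real.log (X ω) + Real.eulerMascheroniConstant) ∂μ)) ∧
    0 < ∫ ω, max 0 (Real.log (X ω) + Real.eulerMascheroniConstant) ∂μ := by
  haveI : IsProbabilityMeasure (expMeasure (1:ℝ)) := isProbabilityMeasure_expMeasure one_pos
  have hγ : (0:ℝ) ≤ Real.eulerMascheroniConstant := by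
    linarith [Real.one_half_lt_eulerMascheroniConstant]
  have hmapX : ∀ (f : ℝ → ℝ), Measurable f → ∫ ω, f (X ω) ∂μ = ∫ x, f x ∂(expMeasure 1) := by
    intro f hf
    rw [← hXd, integral_map hXm.aemeasurable hf.aestronglyMeasurable]
  have hmapG : ∀ (f : ℝ → ℝ), Measurable f → ∫ ω, f (G ω) ∂μ = ∫ x, f x ∂(expMeasure 1) := by
    intro f hf
    rw [← hGd, integral_map hGm.aemeasurable hf.aestronglyMeasurable]
  have intLog : Integrable Real.log (expMeasure 1) := integrable_log_expMeasure
  have intAbsLog : Integrable (fun x => |Real.log x|) (expMeasure 1) := intLog.abs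
  have intId : Integrable (fun x : ℝ => x) (expMeasure 1) := integrable_id_expMeasure
  have intBound : Integrable (fun x => |Real.log x| + x) (expMeasure 1) := intAbsLog.add intId
  have hpos := ae_pos_expMeasure
  have hlogint : ∫ x, Real.log x ∂(expMeasure 1) = -Real.eulerMascheroniConstant :=
    integral_log_expMeasure' integrableOn_log_exp integral_log_mul_exp (integral_expMeasure _)
  have hmeasP : ∀ P : ℝ, Measurable fun x : ℝ => Real.log (P⁻¹ + x) :=
    fun P => Real.measurable_log.comp (measurable_const.add measurable_id)
  have hinvle : ∀ P : ℝ, 1 ≤ P → P⁻¹ ≤ 1 := by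
    intro P hP
    have hP0 : (0:ℝ) < P := by linarith
    have h1 : P⁻¹ * P = 1 := inv_mul_cancel₀ hP0.ne'
    nlinarith [inv_pos.mpr hP0]
  have hbnd : ∀ P : ℝ, 1 ≤ P → ∀ᵐ x ∂(expMeasure 1), ‖Real.log (P⁻¹ + x)‖ ≤ |Real.log x| + x := by
    intro P hP
    filter_upwards [hpos] with x hx
    rw [Real.norm_eq_abs]
    exact log_abs_bound hx (inv_pos.mpr (by linarith)) (hinvle P hP)
  have hdint : ∀ P : ℝ, 1 ≤ P → Integrable (fun x => Real.log (P⁻¹ + x)) (expMeasure 1) := by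
    intro P hP
    exact intBound.mono' (hmeasP P).aestronglyMeasurable (hbnd P hP)
  have hdtend : Tendsto (fun P : ℝ => ∫ x, Real.log (P⁻¹ + x) ∂(expMeasure 1)) atTop
      (𝓝 (-Real.eulerMascheroniConstant)) := by
    rw [← hlogint]
    refine tendsto_integral_filter_of_dominated_convergence (fun x => |Real.log x| + x)
      (Eventually.of_forall fun P => (hmeasP P).aestronglyMeasurable) ?_ intBound ?_
    · filter_upwards [eventually_ge_atTop (1:ℝ)] with P hP using hbnd P hP
    · filter_upwards [hpos] with x hx
      have h1 : Tendsto (fun P : ℝ => P⁻¹ + x) atTop (𝓝 (0 + x)) :=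
        tendsto_inv_atTop_zero.add tendsto_const_nhds
      rw [zero_add] at h1
      exact ((Real.continuousAt_log hx.ne').tendsto).comp h1
  have hceq : ∀ P : ℝ, 1 ≤ P → ∫ x, Real.log (1 + x * P) ∂(expMeasure 1)
      = Real.log P + ∫ x, Real.log (P⁻¹ + x) ∂(expMeasure 1) := by
    intro P hP
    have hP0 : (0:ℝ) < P := by linarith
    have h1 : ∫ x, Real.log (1 + x * P) ∂(expMeasure 1)
        = ∫ x, (Real.log P + Real.log (P⁻¹ + x)) ∂(expMeasure 1) := by
      refine integral_congr_ae ?_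
      filter_upwards [hpos] with x hx
      have hxP : (0:ℝ) < P⁻¹ + x := by positivity
      rw [← Real.log_mul hP0.ne' hxP.ne']
      congr 1
      field_simp
    rw [h1, integral_add (integrable_const _) (hdint P hP), integral_const]
    simp
  have hcμ : ∀ P : ℝ, (∫ ω', Real.log (1 + G ω' * P) ∂μ)
      = ∫ x, Real.log (1 + x * P) ∂(expMeasure 1) := fun P =>
    hmapG _ (Real.measurable_log.comp (measurable_const.add (measurable_id.mul_const P)))
  have hLμ : ∀ P : ℝ, (∫ ω, max 0 (Real.log (1 + X ω * P)
        - ∫ ω', Real.log (1 + G ω' * P) ∂μ) ∂μ)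
      = ∫ x, max 0 (Real.log (1 + x * P) - ∫ y, Real.log (1 + y * P) ∂(expMeasure 1))
          ∂(expMeasure 1) := by
    intro P
    rw [hcμ P]
    exact hmapX _ (measurable_const.max
      ((Real.measurable_log.comp (measurable_const.add (measurable_id.mul_const P))).sub
        measurable_const))
  have hTμ : (∫ ω, max 0 (Real.log (X ω) + Real.eulerMascheroniConstant) ∂μ)
      = ∫ x, max 0 (Real.log x + Real.eulerMascheroniConstant) ∂(expMeasure 1) :=
    hmapX _ (measurable_const.max (Real.measurable_log.add_const _))
  have hmain : Tendsto (fun P : ℝ => ∫ x, max 0 (Real.log (1 + x * P)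
        - ∫ y, Real.log (1 + y * P) ∂(expMeasure 1)) ∂(expMeasure 1)) atTop
      (𝓝 (∫ x, max 0 (Real.log x + Real.eulerMascheroniConstant) ∂(expMeasure 1))) := by
    have hcongr : ∀ᶠ P in atTop, (∫ x, max 0 (Real.log (1 + x * P)
          - ∫ y, Real.log (1 + y * P) ∂(expMeasure 1)) ∂(expMeasure 1))
        = ∫ x, max 0 (Real.log (P⁻¹ + x)
            - ∫ y, Real.log (P⁻¹ + y) ∂(expMeasure 1)) ∂(expMeasure 1) := by
      filter_upwards [eventually_ge_atTop (1:ℝ)] with P hP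
      refine integral_congr_ae ?_
      filter_upwards [hpos] with x hx
      have hP0 : (0:ℝ) < P := by linarith
      have hxP : (0:ℝ) < P⁻¹ + x := by positivity
      have hsplit : Real.log (1 + x * P) = Real.log P + Real.log (P⁻¹ + x) := by
        rw [← Real.log_mul hP0.ne' hxP.ne']
        congr 1
        field_simp
      rw [hceq P hP, hsplit]
      congr 1
      ring
    have hev1 : ∀ᶠ P in atTop,
        |(∫ x, Real.log (P⁻¹ + x) ∂(expMeasure 1)) + Real.eulerMascheroniConstant| ≤ 1 := by
      have := (Metric.tendsto_nhds.mp hdtend) 1 one_pos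
      filter_upwards [this] with P hP
      rw [Real.dist_eq, sub_neg_eq_add] at hP
      exact hP.le
    have h2 : Tendsto (fun P : ℝ => ∫ x, max 0 (Real.log (P⁻¹ + x)
          - ∫ y, Real.log (P⁻¹ + y) ∂(expMeasure 1)) ∂(expMeasure 1)) atTop
        (𝓝 (∫ x, max 0 (Real.log x + Real.eulerMascheroniConstant) ∂(expMeasure 1))) := by
      refine tendsto_integral_filter_of_dominated_convergence
        (fun x => |Real.log x| + x + (Real.eulerMascheroniConstant + 1))
        (Eventually.of_forall fun P => (measurable_const.max
          ((hmeasP P).sub measurable_const)).aestronglyMeasurable) ?_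
        (intBound.add (integrable_const _)) ?_
      · filter_upwards [eventually_ge_atTop (1:ℝ), hev1] with P hP hP1
        filter_upwards [hpos] with x hx
        have h1 : |Real.log (P⁻¹ + x)| ≤ |Real.log x| + x :=
          log_abs_bound hx (inv_pos.mpr (by linarith)) (hinvle P hP)
        have h2 : |∫ y, Real.log (P⁻¹ + y) ∂(expMeasure 1)|
            ≤ Real.eulerMascheroniConstant + 1 := by
          calc |∫ y, Real.log (P⁻¹ + y) ∂(expMeasure 1)|
              = |((∫ y, Real.log (P⁻¹ + y) ∂(expMeasure 1)) + Real.eulerMascheroniConstant)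
                + (-Real.eulerMascheroniConstant)| := by rw [add_neg_cancel_right]
            _ ≤ |(∫ y, Real.log (P⁻¹ + y) ∂(expMeasure 1)) + Real.eulerMascheroniConstant|
                + |(-Real.eulerMascheroniConstant)| := abs_add_le _ _
            _ ≤ 1 + Real.eulerMascheroniConstant := by
                rw [abs_neg, abs_of_nonneg hγ]; linarith
            _ = Real.eulerMascheroniConstant + 1 := by ring
        rw [Real.norm_eq_abs, abs_of_nonneg (le_max_left _ _)]
        have h3 : max 0 (Real.log (P⁻¹ + x) - ∫ y, Real.log (P⁻¹ + y) ∂(expMeasure 1))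
            ≤ |Real.log (P⁻¹ + x) - ∫ y, Real.log (P⁻¹ + y) ∂(expMeasure 1)| :=
          max_le (abs_nonneg _) (le_abs_self _)
        have h5 : |Real.log (P⁻¹ + x) - ∫ y, Real.log (P⁻¹ + y) ∂(expMeasure 1)|
            ≤ |Real.log (P⁻¹ + x)| + |∫ y, Real.log (P⁻¹ + y) ∂(expMeasure 1)| :=
          abs_sub _ _
        linarith
      · filter_upwards [hpos] with x hx
        have h1 : Tendsto (fun P : ℝ => P⁻¹ + x) atTop (𝓝 (0 + x)) :=
          tendsto_inv_atTop_zero.add tendsto_const_nhds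
        rw [zero_add] at h1
        have h3 := ((Real.continuousAt_log hx.ne').tendsto).comp h1
        have h4 := h3.sub hdtend
        rw [sub_neg_eq_add] at h4
        exact tendsto_const_nhds.max h4
    exact Tendsto.congr' (hcongr.mono fun P h => h.symm) h2
  refine ⟨?_, ?_⟩
  · simp only [hLμ, hTμ]
    exact hmain
  · rw [hTμ]
    have hint : Integrable (fun x => max 0 (Real.log x + Real.eulerMascheroniConstant))
        (expMeasure 1) := by
      refine (intAbsLog.add (integrable_const Real.eulerMascheroniConstant)).mono'
        (measurable_const.max (Real.measurable_log.add_const _)).aestronglyMeasurable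
        (ae_of_all _ fun x => ?_)
      rw [Real.norm_eq_abs, abs_of_nonneg (le_max_left _ _)]
      calc max 0 (Real.log x + Real.eulerMascheroniConstant)
          ≤ |Real.log x + Real.eulerMascheroniConstant| := max_le (abs_nonneg _) (le_abs_self _)
        _ ≤ |Real.log x| + |Real.eulerMascheroniConstant| := abs_add_le _ _
        _ = |Real.log x| + Real.eulerMascheroniConstant := by rw [abs_of_nonneg hγ]
    refine (integral_pos_iff_support_of_nonneg (fun x => le_max_left _ _) hint).mpr ?_
    refine lt_of_lt_of_le measure_Ioi_one_pos (measure_mono ?_)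
    intro x hx
    have hx1 : (1:ℝ) < x := hx
    have hgt : 0 < Real.log x + Real.eulerMascheroniConstant := by
      have := Real.log_pos hx1
      linarith
    rw [Function.mem_support]
    exact (lt_max_iff.mpr (Or.inr hgt)).ne'
end
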